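/- arXiv:2207.03619 — 7 statements merged into one kernel-verified Lean document; each statement's English description precedes it below -/
import Mathlib

section
/- Suppose H is a BSHM(n,ℓ,a,b) with respect to H₁, where 2 < ℓ < n−2 and the values a and b are both attained. Then ℓ ≡ a ≡ b (mod 4). -/
open Matrix
set_option maxHeartbeats 2000000

/-- A Hadamard matrix of order `n`: entries in `{1,-1}` and `Hᵀ * H = n • 1`. -/
def IsHadamard {n : ℕ} (H : Matrix (Fin n) (Fin n) ℤ) : Prop :=
  (∀ i j, H i j = 1 ∨ H i j = -1) ∧ Hᵀ * H = (n : ℤ) • 1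

/-- Dot product of columns `j` and `k` of the submatrix of `H` formed by the rows in `R`. -/
def colDot {n : ℕ} (H : Matrix (Fin n) (Fin n) ℤ) (R : Finset (Fin n)) (j k : Fin n) : ℤ :=
  ∑ i ∈ R, H i j * H i k

/-- `H` is a balanced splittable Hadamard matrix with respect to the submatrix formed by the
rows in `R`, with values `a, b`. -/
def IsBSHM {n : ℕ} (H : Matrix (Fin n) (Fin n) ℤ) (R : Finset (Fin n)) (a b : ℤ) : Prop :=
  _root_.IsHadamard H ∧ ∀ j k : Fin n, j ≠ k → colDot H R j k = a ∨ colDot H R j k = b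

section Aux

variable {n : ℕ} {H : Matrix (Fin n) (Fin n) ℤ}

lemma BSHM.colDot_comm (R : Finset (Fin n)) (j k : Fin n) :
    colDot H R j k = colDot H R k j :=
  Finset.sum_congr rfl fun i _ => mul_comm _ _

lemma BSHM.colDot_self (hpm : ∀ i j, H i j = 1 ∨ H i j = -1) (R : Finset (Fin n)) (j : Fin n) :
    colDot H R j j = R.card := by
  unfold colDot
  rw [Finset.sum_congr rfl (fun i _ => show H i j * H i j = 1 by
    rcases hpm i j with h | h <;> rw [h] <;> norm_num)]
  simp

lemma BSHM.tri (hpm : ∀ i j, H i j = 1 ∨ H i j = -1) (R : Finset (Fin n)) (j k m : Fin n) :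
    ((colDot H R j k + colDot H R k m + colDot H R j m : ℤ) : ZMod 4)
      = 3 * (R.card : ZMod 4) := by
  unfold colDot
  rw [← Finset.sum_add_distrib, ← Finset.sum_add_distrib]
  push_cast
  rw [Finset.sum_congr rfl (fun i _ => show ((H i j : ZMod 4) * (H i k : ZMod 4)
      + (H i k : ZMod 4) * (H i m : ZMod 4) + (H i j : ZMod 4) * (H i m : ZMod 4)) = 3 by
    rcases hpm i j with h1 | h1 <;> rcases hpm i k with h2 | h2 <;> rcases hpm i m with h3 | h3 <;>
      rw [h1, h2, h3] <;> push_cast <;> decide)]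
  rw [Finset.sum_const, nsmul_eq_mul]
  ring

lemma BSHM.coleq (hpm : ∀ i j, H i j = 1 ∨ H i j = -1) (S : Finset (Fin n)) (j k : Fin n)
    (h : colDot H S j k = S.card) : ∀ i ∈ S, H i j = H i k := by
  unfold colDot at h
  have h0 : ∑ i ∈ S, (1 - H i j * H i k) = 0 := by
    rw [Finset.sum_sub_distrib, h]; simp
  have h1 := (Finset.sum_eq_zero_iff_of_nonneg (fun i _ => by
    rcases hpm i j with h2 | h2 <;> rcases hpm i k with h3 | h3 <;> rw [h2, h3] <;>
      norm_num)).mp h0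
  intro i hi
  have := h1 i hi
  rcases hpm i j with h2 | h2 <;> rcases hpm i k with h3 | h3 <;> rw [h2, h3] <;>
    rw [h2, h3] at this <;> norm_num at this

lemma BSHM.arith6 (u1 u2 u3 v1 v2 v3 : ℤ)
    (hu1 : u1 = 1 ∨ u1 = -1) (hu2 : u2 = 1 ∨ u2 = -1) (hu3 : u3 = 1 ∨ u3 = -1)
    (hv1 : v1 = 1 ∨ v1 = -1) (hv2 : v2 = 1 ∨ v2 = -1) (hv3 : v3 = 1 ∨ v3 = -1)
    (e12 : u1 * u2 = -(v1 * v2)) (e13 : u1 * u3 = -(v1 * v3))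
    (e23 : u2 * u3 = -(v2 * v3)) : False := by
  rcases hu1 with rfl | rfl <;> rcases hu2 with rfl | rfl <;> rcases hu3 with rfl | rfl <;>
    rcases hv1 with rfl | rfl <;> rcases hv2 with rfl | rfl <;> rcases hv3 with rfl | rfl <;>
    omega

lemma BSHM.threeRows (hpm : ∀ i j, H i j = 1 ∨ H i j = -1)
    (S : Finset (Fin n)) (hS : 3 ≤ S.card)
    (horth : ∀ i i', i ≠ i' → ∑ m, H i m * H i' m = 0)
    (P : Fin n → Prop) [DecidablePred P] (p q : Fin n) (hPp : P p) (hPq : ¬ P q)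
    (hp : ∀ m, P m → ∀ i ∈ S, H i m = H i p)
    (hq : ∀ m, ¬ P m → ∀ i ∈ S, H i m = H i q) : False := by
  have claim : ∀ i ∈ S, ∀ i' ∈ S, i ≠ i' → H i p * H i' p = -(H i q * H i' q) := by
    intro i hi i' hi' hne
    have h0 := horth i i' hne
    rw [← Finset.sum_filter_add_sum_filter_not Finset.univ P] at h0
    have hx : ∑ m ∈ Finset.univ.filter P, H i m * H i' m
        = (Finset.univ.filter P).card * (H i p * H i' p) := by
      rw [Finset.sum_congr rfl (fun m hm => by
        rw [hp m (Finset.mem_filter.mp hm).2 i hi, hp m (Finset.mem_filter.mp hm).2 i' hi'])]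
      rw [Finset.sum_const, nsmul_eq_mul]
    have hy : ∑ m ∈ Finset.univ.filter (fun m => ¬ P m), H i m * H i' m
        = (Finset.univ.filter (fun m => ¬ P m)).card * (H i q * H i' q) := by
      rw [Finset.sum_congr rfl (fun m hm => by
        rw [hq m (Finset.mem_filter.mp hm).2 i hi, hq m (Finset.mem_filter.mp hm).2 i' hi'])]
      rw [Finset.sum_const, nsmul_eq_mul]
    rw [hx, hy] at h0
    have hxpos : 0 < ((Finset.univ.filter P).card : ℤ) := by
      have : p ∈ Finset.univ.filter P := Finset.mem_filter.mpr ⟨Finset.mem_univ _, hPp⟩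
      exact_mod_cast Finset.card_pos.mpr ⟨p, this⟩
    have hypos : 0 < ((Finset.univ.filter (fun m => ¬ P m)).card : ℤ) := by
      have : q ∈ Finset.univ.filter (fun m => ¬ P m) :=
        Finset.mem_filter.mpr ⟨Finset.mem_univ _, hPq⟩
      exact_mod_cast Finset.card_pos.mpr ⟨q, this⟩
    rcases hpm i p with h1 | h1 <;> rcases hpm i' p with h2 | h2 <;>
      rcases hpm i q with h3 | h3 <;> rcases hpm i' q with h4 | h4 <;>
      rw [h1, h2, h3, h4] <;> rw [h1, h2, h3, h4] at h0 <;> push_cast at h0 ⊢ <;> nlinarith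
  obtain ⟨T, hTS, hT3⟩ := Finset.exists_subset_card_eq hS
  obtain ⟨i1, i2, i3, h12, h13, h23, rfl⟩ := Finset.card_eq_three.mp hT3
  have m1 : i1 ∈ S := hTS (by simp)
  have m2 : i2 ∈ S := hTS (by simp)
  have m3 : i3 ∈ S := hTS (by simp)
  exact BSHM.arith6 (H i1 p) (H i2 p) (H i3 p) (H i1 q) (H i2 q) (H i3 q)
    (hpm i1 p) (hpm i2 p) (hpm i3 p) (hpm i1 q) (hpm i2 q) (hpm i3 q)
    (claim i1 m1 i2 m2 h12) (claim i1 m1 i3 m3 h13) (claim i2 m2 i3 m3 h23)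

lemma BSHM.rowOrth (hn : n ≠ 0) (hH : Hᵀ * H = (n:ℤ) • 1) : H * Hᵀ = (n:ℤ) • 1 := by
  have hdet : H.det ≠ 0 := by
    have h1 : H.det * H.det = (n:ℤ)^n := by
      have := congrArg Matrix.det hH
      rwa [Matrix.det_mul, Matrix.det_transpose, Matrix.det_smul, Matrix.det_one, mul_one,
        Fintype.card_fin] at this
    intro h
    rw [h, mul_zero] at h1
    exact pow_ne_zero n (by exact_mod_cast hn : (n:ℤ) ≠ 0) h1.symm
  have key : (H * Hᵀ - (n:ℤ) • 1) * H = 0 := by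
    rw [sub_mul, Matrix.mul_assoc, hH, Matrix.mul_smul, mul_one, Matrix.smul_mul,
      Matrix.one_mul, sub_self]
  have key2 : (H * Hᵀ - (n:ℤ) • 1) * (H.det • (1 : Matrix (Fin n) (Fin n) ℤ)) = 0 := by
    rw [← Matrix.mul_adjugate, ← Matrix.mul_assoc, key, Matrix.zero_mul]
  have key3 : H * Hᵀ - (n:ℤ) • 1 = 0 := by
    ext i j
    have := congrFun (congrFun key2 i) j
    simp only [Matrix.mul_smul, mul_one, Matrix.smul_apply, Matrix.zero_apply,
      smul_eq_mul] at this
    rcases mul_eq_zero.mp this with h | h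
    · exact absurd h hdet
    · exact h
  rw [sub_eq_zero] at key3
  exact key3

lemma BSHM.parseval (hHHt : H * Hᵀ = (n:ℤ) • 1) (W : Fin n → ℤ) :
    ∑ m, (∑ i, W i * H i m)^2 = n * ∑ i, (W i)^2 := by
  have e1 : ∀ m, (∑ i, W i * H i m) = (Hᵀ *ᵥ W) m := by
    intro m; simp [Matrix.mulVec, dotProduct, mul_comm]
  calc ∑ m, (∑ i, W i * H i m)^2 = (W ᵥ* H) ⬝ᵥ (Hᵀ *ᵥ W) := by
        simp [dotProduct, Matrix.vecMul, sq, e1]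
    _ = ((W ᵥ* H) ᵥ* Hᵀ) ⬝ᵥ W := by rw [Matrix.dotProduct_mulVec]
    _ = (W ᵥ* (H * Hᵀ)) ⬝ᵥ W := by rw [Matrix.vecMul_vecMul]
    _ = n * ∑ i, (W i)^2 := by
        rw [hHHt]
        simp [dotProduct, Finset.mul_sum, sq]
        exact Finset.sum_congr rfl fun i _ => by ring

lemma BSHM.pairVal (hpm : ∀ i j, H i j = 1 ∨ H i j = -1)
    (hcol : ∀ j k : Fin n, j ≠ k → ∑ i, H i j * H i k = 0)
    (hHHt : H * Hᵀ = (n:ℤ) • 1)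
    (R : Finset (Fin n)) (j k : Fin n) (hjk : j ≠ k)
    (hsame : ∀ m, m ≠ j → m ≠ k → colDot H R j m = colDot H R k m) :
    colDot H R j k = R.card ∨ colDot H R j k = (R.card : ℤ) - n := by
  classical
  set W : Fin n → ℤ := fun i => if i ∈ R then H i j - H i k else H i k - H i j with hW
  set e : ℤ := colDot H R j k with he
  have colFull : ∀ m m' : Fin n, ∑ i, H i m * H i m' = if m = m' then (n:ℤ) else 0 := by
    intro m m'
    by_cases h : m = m'
    · subst h
      rw [if_pos rfl, Finset.sum_congr rfl (fun i _ => show H i m * H i m = 1 by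
        rcases hpm i m with h | h <;> rw [h] <;> norm_num)]
      simp
    · rw [if_neg h]; exact hcol m m' h
  have hc : ∀ m, (∑ i, W i * H i m)
      = 2 * (colDot H R j m - colDot H R k m)
        - ((if j = m then (n:ℤ) else 0) - (if k = m then (n:ℤ) else 0)) := by
    intro m
    have hR : ∑ i ∈ R, W i * H i m = colDot H R j m - colDot H R k m := by
      unfold colDot
      rw [← Finset.sum_sub_distrib]
      refine Finset.sum_congr rfl fun i hi => ?_
      simp only [hW]
      rw [if_pos hi]; ring
    have hRc : ∑ i ∈ Rᶜ, W i * H i m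
        = -((∑ i, (H i j - H i k) * H i m) - ∑ i ∈ R, (H i j - H i k) * H i m) := by
      have h1 : ∑ i ∈ Rᶜ, W i * H i m = ∑ i ∈ Rᶜ, -((H i j - H i k) * H i m) := by
        refine Finset.sum_congr rfl fun i hi => ?_
        simp only [hW]
        rw [if_neg (Finset.mem_compl.mp hi)]; ring
      have h2 : ∑ i ∈ Rᶜ, -((H i j - H i k) * H i m)
          = -∑ i ∈ Rᶜ, (H i j - H i k) * H i m := by
        rw [Finset.sum_neg_distrib]
      have h3 := Finset.sum_add_sum_compl R (fun i => (H i j - H i k) * H i m)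
      rw [h1, h2]
      linarith [h3]
    have hT : ∑ i, (H i j - H i k) * H i m
        = (if j = m then (n:ℤ) else 0) - (if k = m then (n:ℤ) else 0) := by
      rw [← colFull j m, ← colFull k m, ← Finset.sum_sub_distrib]
      exact Finset.sum_congr rfl fun i _ => by ring
    have hRR : ∑ i ∈ R, (H i j - H i k) * H i m = colDot H R j m - colDot H R k m := by
      unfold colDot
      rw [← Finset.sum_sub_distrib]
      exact Finset.sum_congr rfl fun i _ => by ring
    have hsplit : ∑ i, W i * H i m = ∑ i ∈ R, W i * H i m + ∑ i ∈ Rᶜ, W i * H i m :=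
      (Finset.sum_add_sum_compl R _).symm
    rw [hsplit, hR, hRc, hT, hRR]
    ring
  have hcj : (∑ i, W i * H i j) = 2 * ((R.card : ℤ) - e) - n := by
    rw [hc j, BSHM.colDot_self hpm, if_pos rfl, if_neg (Ne.symm hjk),
      BSHM.colDot_comm R k j, ← he]
    ring
  have hck : (∑ i, W i * H i k) = -(2 * ((R.card : ℤ) - e) - n) := by
    rw [hc k, BSHM.colDot_self hpm, if_neg hjk, if_pos rfl, ← he]
    ring
  have hcm : ∀ m, m ≠ j → m ≠ k → (∑ i, W i * H i m) = 0 := by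
    intro m hmj hmk
    rw [hc m, hsame m hmj hmk, if_neg (fun h => hmj h.symm), if_neg (fun h => hmk h.symm)]
    ring
  have hWsq : ∑ i, (W i)^2 = 2 * n := by
    have h1 : ∀ i, (W i)^2 = 2 - 2 * (H i j * H i k) := by
      intro i
      have e1 : (H i j)^2 = 1 := by rcases hpm i j with h | h <;> rw [h] <;> norm_num
      have e2 : (H i k)^2 = 1 := by rcases hpm i k with h | h <;> rw [h] <;> norm_num
      simp only [hW]
      by_cases hi : i ∈ R
      · rw [if_pos hi]; nlinarith [e1, e2]
      · rw [if_neg hi]; nlinarith [e1, e2]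
    rw [Finset.sum_congr rfl fun i _ => h1 i, Finset.sum_sub_distrib, ← Finset.mul_sum,
      hcol j k hjk]
    simp [Finset.card_univ]
    ring
  have hPar := BSHM.parseval hHHt W
  have hLHS : ∑ m, (∑ i, W i * H i m)^2
      = (2 * ((R.card : ℤ) - e) - n)^2 + (-(2 * ((R.card : ℤ) - e) - n))^2 := by
    rw [← Finset.sum_subset (Finset.subset_univ ({j, k} : Finset (Fin n)))
      (fun m _ hm => by
        have hmj : m ≠ j := fun h => hm (by simp [h])
        have hmk : m ≠ k := fun h => hm (by simp [h])
        rw [hcm m hmj hmk]; norm_num)]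
    rw [Finset.sum_pair hjk, hcj, hck]
  rw [hLHS, hWsq] at hPar
  have hsq : (2 * ((R.card : ℤ) - e) - n) * (2 * ((R.card : ℤ) - e) - n) = n * n := by
    nlinarith
  rcases mul_self_eq_mul_self_iff.mp hsq with h | h
  · right; rw [he] at *; linarith
  · left; rw [he] at *; linarith

end Aux

theorem stmt12 {n ℓ : ℕ} (a b : ℤ) (H : Matrix (Fin n) (Fin n) ℤ)
    (R : Finset (Fin n)) (hRcard : R.card = ℓ) (h1 : 2 < ℓ) (h2 : ℓ < n - 2)
    (hbshm : IsBSHM H R a b)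
    (haAtt : ∃ j k, j ≠ k ∧ colDot H R j k = a)
    (hbAtt : ∃ j k, j ≠ k ∧ colDot H R j k = b) :
    Int.ModEq 4 (ℓ : ℤ) a ∧ Int.ModEq 4 a b := by
  classical
  obtain ⟨⟨hpm, hH⟩, hd⟩ := hbshm
  have hn6 : 6 ≤ n := by
    rcases n with _ | _ | m
    · omega
    · omega
    · simp only [Nat.succ_sub_succ] at h2; omega
  have hn0 : n ≠ 0 := by omega
  have hcardc : (Rᶜ.card : ℤ) = (n : ℤ) - R.card := by
    rw [Finset.card_compl, Fintype.card_fin]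
    have : R.card ≤ n := by rw [hRcard]; omega
    push_cast [Nat.cast_sub this]
    ring
  have hSc : 3 ≤ Rᶜ.card := by
    rw [Finset.card_compl, Fintype.card_fin, hRcard]
    omega
  have hHHt : H * Hᵀ = (n:ℤ) • 1 := BSHM.rowOrth hn0 hH
  have hcol : ∀ j k : Fin n, j ≠ k → ∑ i, H i j * H i k = 0 := by
    intro j k hjk
    have := congrFun (congrFun hH j) k
    simpa [Matrix.mul_apply, Matrix.transpose_apply, Matrix.smul_apply,
      Matrix.one_apply_ne hjk] using this
  have hrow : ∀ i i' : Fin n, i ≠ i' → ∑ m, H i m * H i' m = 0 := by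
    intro i i' hii
    have := congrFun (congrFun hHHt i) i'
    simpa [Matrix.mul_apply, Matrix.transpose_apply, Matrix.smul_apply,
      Matrix.one_apply_ne hii] using this
  have htri : ∀ j k m : Fin n, ((colDot H R j k : ZMod 4) + (colDot H R k m : ZMod 4)
      + (colDot H R j m : ZMod 4)) = 3 * (ℓ : ZMod 4) := by
    intro j k m
    have := BSHM.tri hpm R j k m
    rw [hRcard] at this
    push_cast at this
    exact this
  have castMod : ∀ x y : ℤ, (x : ZMod 4) = y → Int.ModEq 4 x y := fun x y h => by
    rwa [ZMod.intCast_eq_intCast_iff] at h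
  by_cases hAB : ((a : ZMod 4)) = (b : ZMod 4)
  · -- a ≡ b (mod 4): use any triangle to get ℓ ≡ a
    have j0 : Fin n := ⟨0, by omega⟩
    set p0 : Fin n := ⟨0, by omega⟩ with hp0
    set p1 : Fin n := ⟨1, by omega⟩ with hp1
    set p2 : Fin n := ⟨2, by omega⟩ with hp2
    have h01 : p0 ≠ p1 := by simp [hp0, hp1, Fin.ext_iff]
    have h12 : p1 ≠ p2 := by simp [hp1, hp2, Fin.ext_iff]
    have h02 : p0 ≠ p2 := by simp [hp0, hp2, Fin.ext_iff]
    have hcast : ∀ j k : Fin n, j ≠ k → ((colDot H R j k : ℤ) : ZMod 4) = (a : ZMod 4) := by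
      intro j k hjk
      rcases hd j k hjk with h | h
      · rw [h]
      · rw [h]; exact hAB.symm
    have hsum := htri p0 p1 p2
    rw [hcast p0 p1 h01, hcast p1 p2 h12, hcast p0 p2 h02] at hsum
    have hLA : (ℓ : ZMod 4) = (a : ZMod 4) := by
      have : ∀ A L : ZMod 4, A + A + A = 3 * L → L = A := by decide
      exact this _ _ hsum
    constructor
    · apply castMod
      push_cast
      exact hLA
    · exact castMod a b hAB
  · exfalso
    have hab : a ≠ b := fun h => hAB (by rw [h])
    -- build the two-value structure
    obtain ⟨w, c, hwc, hno1, hno3⟩ : ∃ w c : ℤ, ((w = a ∧ c = b) ∨ (w = b ∧ c = a))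
        ∧ (2*(w : ZMod 4) + (c : ZMod 4) ≠ 3 * (ℓ : ZMod 4))
        ∧ (3*(c : ZMod 4) ≠ 3 * (ℓ : ZMod 4)) := by
      by_cases e1 : 2*(a : ZMod 4) + (b : ZMod 4) = 3 * (ℓ : ZMod 4)
      · refine ⟨b, a, Or.inr ⟨rfl, rfl⟩, ?_, ?_⟩
        · intro h; apply hAB
          have : ∀ A B X : ZMod 4, 2*A + B = X → 2*B + A = X → A = B := by decide
          exact this _ _ _ e1 h
        · intro h; apply hAB
          have : ∀ A B X : ZMod 4, 2*A + B = X → 3*A = X → A = B := by decide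
          exact this _ _ _ e1 h
      · by_cases e2 : 3*(b : ZMod 4) = 3 * (ℓ : ZMod 4)
        · refine ⟨b, a, Or.inr ⟨rfl, rfl⟩, ?_, ?_⟩
          · intro h; apply hAB
            have : ∀ A B X : ZMod 4, 3*B = X → 2*B + A = X → A = B := by decide
            exact this _ _ _ e2 h
          · intro h; apply hAB
            have : ∀ A B X : ZMod 4, 3*B = X → 3*A = X → A = B := by decide
            exact this _ _ _ e2 h
        · exact ⟨a, b, Or.inl ⟨rfl, rfl⟩, e1, e2⟩
    have hwne : w ≠ c := by rcases hwc with ⟨hw, hc⟩ | ⟨hw, hc⟩ <;> rw [hw, hc]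
      <;> [exact hab; exact hab.symm]
    have hmem : ∀ j k : Fin n, j ≠ k → colDot H R j k = w ∨ colDot H R j k = c := by
      intro j k hjk
      rcases hwc with ⟨hw, hc⟩ | ⟨hw, hc⟩
      · rw [hw, hc]; exact hd j k hjk
      · rw [hw, hc]; exact (hd j k hjk).symm
    -- F1 and F2
    have F1 : ∀ j k m : Fin n, j ≠ k → k ≠ m → j ≠ m →
        colDot H R j k = w → colDot H R k m = w → colDot H R j m = w := by
      intro j k m hjk hkm hjm d1 d2
      rcases hmem j m hjm with h | h
      · exact h
      · exfalso; apply hno1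
        have := htri j k m
        rw [d1, d2, h] at this
        linear_combination this
    have F2 : ∀ j k m : Fin n, j ≠ k → k ≠ m → j ≠ m →
        colDot H R j k = c → colDot H R k m = c → colDot H R j m = w := by
      intro j k m hjk hkm hjm d1 d2
      rcases hmem j m hjm with h | h
      · exact h
      · exfalso; apply hno3
        have := htri j k m
        rw [d1, d2, h] at this
        linear_combination this
    -- attained cross pair
    obtain ⟨p, q, hpq, hdpq⟩ : ∃ p q : Fin n, p ≠ q ∧ colDot H R p q = c := by
      rcases hwc with ⟨hw, hc⟩ | ⟨hw, hc⟩
      · rw [hc]; exact hbAtt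
      · rw [hc]; exact haAtt
    set P : Fin n → Prop := fun m => m = p ∨ colDot H R m p = w with hP
    have hPp : P p := Or.inl rfl
    have hPq : ¬ P q := by
      rintro (h | h)
      · exact hpq h.symm
      · rw [BSHM.colDot_comm R q p, hdpq] at h
        exact hwne h.symm
    have hclassP : ∀ m, m ≠ p → P m → colDot H R m p = w := by
      intro m hmp hm
      rcases hm with h | h
      · exact absurd h hmp
      · exact h
    have hclassN : ∀ m, m ≠ p → ¬ P m → colDot H R m p = c := by
      intro m hmp hm
      rcases hmem m p hmp with h | h
      · exact absurd (Or.inr h) hm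
      · exact h
    have hvalw : ∀ j k : Fin n, j ≠ k → (P j ↔ P k) → colDot H R j k = w := by
      intro j k hjk hiff
      by_cases hjp : j = p
      · subst hjp
        have hk := hiff.mp hPp
        rw [BSHM.colDot_comm]
        exact hclassP k (fun h => hjk h.symm) hk
      · by_cases hkp : k = p
        · subst hkp
          exact hclassP j hjp (hiff.mpr hPp)
        · by_cases hPj : P j
          · have hPk := hiff.mp hPj
            exact F1 j p k hjp (fun h => hkp h.symm) hjk
              (hclassP j hjp hPj) (by rw [BSHM.colDot_comm]; exact hclassP k hkp hPk)
          · have hPk := fun h => hPj (hiff.mpr h)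
            exact F2 j p k hjp (fun h => hkp h.symm) hjk
              (hclassN j hjp hPj) (by rw [BSHM.colDot_comm]; exact hclassN k hkp hPk)
    have hvalc1 : ∀ j k : Fin n, j ≠ k → P j → ¬ P k → colDot H R j k = c := by
      intro j k hjk hPj hPk
      have hkp : k ≠ p := fun h => hPk (h ▸ hPp)
      by_cases hjp : j = p
      · subst hjp
        rw [BSHM.colDot_comm]
        exact hclassN k hkp hPk
      · rcases hmem j k hjk with h | h
        · exfalso
          have := F1 k j p (fun h' => hjk h'.symm) hjp hkp
            (by rw [BSHM.colDot_comm]; exact h) (hclassP j hjp hPj)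
          rw [hclassN k hkp hPk] at this
          exact hwne this.symm
        · exact h
    have hvalc : ∀ j k : Fin n, j ≠ k → ¬ (P j ↔ P k) → colDot H R j k = c := by
      intro j k hjk hniff
      by_cases hPj : P j
      · have hPk : ¬ P k := fun h => hniff ⟨fun _ => h, fun _ => hPj⟩
        exact hvalc1 j k hjk hPj hPk
      · have hPk : P k := by
          by_contra h
          exact hniff ⟨fun h' => absurd h' hPj, fun h' => absurd h' h⟩
        rw [BSHM.colDot_comm]
        exact hvalc1 k j (fun h => hjk h.symm) hPk hPj
    -- a same-class pair
    obtain ⟨r, hrp, hrq⟩ : ∃ r : Fin n, r ≠ p ∧ r ≠ q := by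
      have hcard : ({p, q} : Finset (Fin n)).card < Fintype.card (Fin n) := by
        rw [Finset.card_pair hpq, Fintype.card_fin]; omega
      have : (({p, q} : Finset (Fin n))ᶜ).Nonempty := by
        rw [← Finset.card_pos, Finset.card_compl]
        omega
      obtain ⟨r, hr⟩ := this
      have := Finset.mem_compl.mp hr
      simp only [Finset.mem_insert, Finset.mem_singleton, not_or] at this
      exact ⟨r, this.1, this.2⟩
    obtain ⟨j0, k0, hne0, hcls⟩ : ∃ j0 k0 : Fin n, j0 ≠ k0 ∧ (P j0 ↔ P k0) := by
      by_cases hPr : P r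
      · exact ⟨r, p, hrp, ⟨fun _ => hPp, fun _ => hPr⟩⟩
      · exact ⟨r, q, hrq, ⟨fun h => absurd h hPr, fun h => absurd h hPq⟩⟩
    have hsame : ∀ m, m ≠ j0 → m ≠ k0 → colDot H R j0 m = colDot H R k0 m := by
      intro m hmj hmk
      by_cases hPm : P j0 ↔ P m
      · rw [hvalw j0 m (fun h => hmj h.symm) hPm,
          hvalw k0 m (fun h => hmk h.symm) (hcls.symm.trans hPm)]
      · rw [hvalc j0 m (fun h => hmj h.symm) hPm,
          hvalc k0 m (fun h => hmk h.symm) (fun h => hPm (hcls.trans h))]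
    have hw0 : colDot H R j0 k0 = w := hvalw j0 k0 hne0 hcls
    have hcompl : ∀ j k : Fin n, j ≠ k → colDot H R j k + colDot H Rᶜ j k = 0 := by
      intro j k hjk
      have h3 := Finset.sum_add_sum_compl R (fun i => H i j * H i k)
      have h0 := hcol j k hjk
      unfold colDot
      linarith
    rcases BSHM.pairVal hpm hcol hHHt R j0 k0 hne0 hsame with hcase | hcase
    · -- w = ℓ : columns constant on R within classes
      have hwval : w = (R.card : ℤ) := by rw [← hw0, hcase]
      have hlift : ∀ j k : Fin n, j ≠ k → (P j ↔ P k) → ∀ i ∈ R, H i j = H i k := by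
        intro j k hjk hiff
        exact BSHM.coleq hpm R j k (by rw [hvalw j k hjk hiff, hwval])
      refine BSHM.threeRows hpm R (by omega) hrow P p q hPp hPq ?_ ?_
      · intro m hm
        by_cases hmp : m = p
        · subst hmp; intro i _; rfl
        · exact hlift m p hmp ⟨fun _ => hPp, fun _ => hm⟩
      · intro m hm
        by_cases hmq : m = q
        · subst hmq; intro i _; rfl
        · exact hlift m q hmq ⟨fun h => absurd h hm, fun h => absurd h hPq⟩
    · -- w = ℓ - n : columns constant on Rᶜ within classes
      have hwval : w = (R.card : ℤ) - n := by rw [← hw0, hcase]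
      have hlift : ∀ j k : Fin n, j ≠ k → (P j ↔ P k) → ∀ i ∈ Rᶜ, H i j = H i k := by
        intro j k hjk hiff
        refine BSHM.coleq hpm Rᶜ j k ?_
        have h3 := hcompl j k hjk
        rw [hvalw j k hjk hiff, hwval] at h3
        rw [hcardc]
        linarith
      refine BSHM.threeRows hpm Rᶜ hSc hrow P p q hPp hPq ?_ ?_
      · intro m hm
        by_cases hmp : m = p
        · subst hmp; intro i _; rfl
        · exact hlift m p hmp ⟨fun _ => hPp, fun _ => hm⟩
      · intro m hm
        by_cases hmq : m = q
        · subst hmq; intro i _; rfl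
        · exact hlift m q hmq ⟨fun h => absurd h hm, fun h => absurd h hPq⟩
end

section
/- Let r ≥ 1, let G = (ℤ/2ℤ)^r, and for g, s ∈ G let χ_g(s) = (−1)^{⟨g,s⟩} ∈ {1,−1}, where ⟨g,s⟩ is obtained by summing over the integers the products of corresponding coordinates of g and s taken as 0/1 representatives. Let C(G) be the 2^r × 2^r integer matrix with rows indexed by s ∈ G and columns indexed by g ∈ G whose (s,g) entry is χ_g(s), and for a subset D ⊆ G let C(D) be the |D| × 2^r submatrix of C(G) whose rows are indexed by the elements of D. Let D ⊆ G with |D| = ℓ, 1 ≤ ℓ ≤ 2^r − 1, and let a, b be integers. Then C(G) is a Hadamard matrix of order 2^r containing the all-ones row, and the following are equivalent: (i) the dot product of every two distinct columns of C(D) lies in {a,b} (i.e., C(G) is a BSHM(2^r,ℓ,a,b) with respect to C(D)); (ii) there exist nonnegative integers α and β such that D is a (2^r, ℓ, α, β) partial difference set in G, and additionally the character sum χ_g(D) := Σ_{d∈D} χ_g(d) lies in {a,b} for every nonzero g ∈ G. -/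
open Matrix Finset

/-- The character-table matrix of `(ℤ/2ℤ)^r`: the `(s, g)` entry is
`χ_g(s) = (-1)^{⟨g,s⟩}`, where `⟨g,s⟩` is the sum over `ℤ` of the products of the
`0/1` representatives of the coordinates. -/
def charTable (r : ℕ) : Matrix (Fin r → ZMod 2) (Fin r → ZMod 2) ℤ :=
  fun s g => (-1 : ℤ) ^ (∑ i, (g i).val * (s i).val)

/-- The number of ordered pairs `(x, y)` of distinct elements of `D` with `x - y = d`. -/
def diffCount {r : ℕ} (D : Finset (Fin r → ZMod 2)) (d : Fin r → ZMod 2) : ℕ :=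
  ((D ×ˢ D).filter fun p => p.1 ≠ p.2 ∧ p.1 - p.2 = d).card

namespace Stmt14Aux

variable {r : ℕ}

def ip (g s : Fin r → ZMod 2) : ZMod 2 := ∑ i, g i * s i

def c (g s : Fin r → ZMod 2) : ℤ := (-1) ^ (ip g s).val

lemma neg_one_pow_mod (n : ℕ) : (-1 : ℤ)^n = (-1)^(n % 2) := by
  conv_lhs => rw [← Nat.div_add_mod n 2]
  rw [pow_add, pow_mul]
  norm_num

lemma charTable_eq (s g : Fin r → ZMod 2) : charTable r s g = c g s := by
  unfold charTable c ip
  rw [neg_one_pow_mod]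
  have h : ((∑ i, (g i).val * (s i).val : ℕ) : ZMod 2) = ∑ i, g i * s i := by
    push_cast
    simp [ZMod.natCast_val, ZMod.cast_id]
  rw [← h, ZMod.val_natCast]

lemma val_add_pow (x y : ZMod 2) :
    (-1:ℤ)^x.val * (-1)^y.val = (-1)^(x+y).val := by revert x y; decide

lemma ip_add_right (g s t : Fin r → ZMod 2) : ip g (s + t) = ip g s + ip g t := by
  simp [ip, mul_add, Finset.sum_add_distrib]

lemma ip_symm (g s : Fin r → ZMod 2) : ip g s = ip s g := by
  simp [ip, mul_comm]

lemma c_symm (g s : Fin r → ZMod 2) : c g s = c s g := by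
  unfold c; rw [ip_symm]

lemma c_add_right (g s t : Fin r → ZMod 2) : c g (s + t) = c g s * c g t := by
  unfold c; rw [ip_add_right, ← val_add_pow]

lemma c_zero_right (g : Fin r → ZMod 2) : c g 0 = 1 := by
  simp [c, ip]

lemma c_zero_left (s : Fin r → ZMod 2) : c 0 s = 1 := by
  rw [c_symm, c_zero_right]

def psi (g : Fin r → ZMod 2) : AddChar (Fin r → ZMod 2) ℤ where
  toFun := c g
  map_zero_eq_one' := c_zero_right g
  map_add_eq_mul' := fun {a b} => c_add_right g a b

lemma psi_apply (g s : Fin r → ZMod 2) : psi g s = c g s := rfl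

lemma neg_self (x : Fin r → ZMod 2) : -x = x := by
  funext i
  exact CharTwo.neg_eq (x i)

lemma card_G : Fintype.card (Fin r → ZMod 2) = 2 ^ r := by
  simp

lemma sum_c (g : Fin r → ZMod 2) :
    ∑ s : Fin r → ZMod 2, c g s = if g = 0 then (2 ^ r : ℤ) else 0 := by
  split_ifs with h
  · subst h; simp [c_zero_left]
  · have hg : psi g ≠ 0 := by
      obtain ⟨i, hi⟩ : ∃ i, g i ≠ 0 := by
        by_contra hc
        push_neg at hc
        exact h (funext hc)
      intro hψ
      have h1 : psi g (Pi.single i 1) = 1 := by rw [hψ]; simp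
      have h2 : ip g (Pi.single i 1) = g i := by
        simp [ip, Pi.single_apply, mul_ite, Finset.sum_ite_eq']
      have h3 : g i = 1 := by
        revert hi; generalize g i = x; revert x; decide
      rw [psi_apply] at h1
      unfold c at h1
      rw [h2, h3] at h1
      simp [ZMod.val_one] at h1
    have := (AddChar.sum_eq_zero_iff_ne_zero (ψ := psi g)).2 hg
    simpa [psi_apply] using this



lemma add_eq_zero_iff' (x y : Fin r → ZMod 2) : x + y = 0 ↔ y = x := by
  rw [add_eq_zero_iff_eq_neg, neg_self, eq_comm]

lemma c_mul_left (g h s : Fin r → ZMod 2) : c g s * c h s = c (g + h) s := by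
  rw [c_symm g, c_symm h, ← c_add_right, c_symm]

lemma sum_c_left (s : Fin r → ZMod 2) :
    ∑ g : Fin r → ZMod 2, c g s = if s = 0 then (2 ^ r : ℤ) else 0 := by
  rw [Finset.sum_congr rfl fun g _ => c_symm g s]
  exact sum_c s

variable (D : Finset (Fin r → ZMod 2))

def S (g : Fin r → ZMod 2) : ℤ := ∑ d ∈ D, c g d

lemma S_zero : S D 0 = (D.card : ℤ) := by
  unfold S
  simp [c_zero_left]

lemma inv1 (d : Fin r → ZMod 2) :
    ∑ g : Fin r → ZMod 2, c g d * S D g = if d ∈ D then (2^r : ℤ) else 0 := by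
  unfold S
  simp_rw [Finset.mul_sum, ← c_add_right]
  rw [Finset.sum_comm]
  have h : ∀ x, (∑ g : Fin r → ZMod 2, c g (d + x)) = if x = d then (2^r:ℤ) else 0 := by
    intro x
    rw [sum_c_left]
    congr 1
    rw [eq_iff_iff, add_eq_zero_iff']
  simp_rw [h]
  exact Finset.sum_ite_eq' D d _

lemma inv2 (d : Fin r → ZMod 2) :
    ∑ g : Fin r → ZMod 2, c g d * (S D g)^2
      = 2^r * (((D ×ˢ D).filter fun p => p.1 + p.2 = d).card : ℤ) := by
  have lhs : ∑ g : Fin r → ZMod 2, c g d * (S D g)^2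
      = ∑ x ∈ D, ∑ y ∈ D, (if x + y = d then (2^r : ℤ) else 0) := by
    unfold S
    simp_rw [sq, Finset.sum_mul_sum, Finset.mul_sum, ← c_add_right]
    rw [Finset.sum_comm]
    refine Finset.sum_congr rfl fun x _ => ?_
    rw [Finset.sum_comm]
    refine Finset.sum_congr rfl fun y _ => ?_
    rw [sum_c_left]
    congr 1
    rw [eq_iff_iff, add_eq_zero_iff', eq_comm]
  rw [lhs, ← Finset.sum_product', ← Finset.sum_filter, Finset.sum_const,
    nsmul_eq_mul, mul_comm]

lemma key (a b : ℤ) (hH : ∀ g : Fin r → ZMod 2, g ≠ 0 → S D g = a ∨ S D g = b)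
    (d : Fin r → ZMod 2) (hd : d ≠ 0) :
    (2^r : ℤ) * (((D ×ˢ D).filter fun p => p.1 + p.2 = d).card : ℤ)
      = (a+b) * (if d ∈ D then (2^r:ℤ) else 0) + ((D.card : ℤ)-a)*((D.card:ℤ)-b) := by
  have e1 : ∀ g : Fin r → ZMod 2,
      c g d * (S D g)^2 = (a+b) * (c g d * S D g) - (a*b) * (c g d)
        + c g d * ((S D g - a) * (S D g - b)) := by intro g; ring
  rw [← inv2]
  rw [Finset.sum_congr rfl fun g _ => e1 g]
  rw [Finset.sum_add_distrib, Finset.sum_sub_distrib, ← Finset.mul_sum, ← Finset.mul_sum,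
    inv1, sum_c_left]
  have e2 : ∑ g : Fin r → ZMod 2, c g d * ((S D g - a) * (S D g - b))
      = ((D.card : ℤ)-a)*((D.card:ℤ)-b) := by
    rw [Fintype.sum_eq_single 0]
    · rw [c_zero_left, S_zero, one_mul]
    · intro g hg
      rcases hH g hg with h | h <;> rw [h] <;> ring
  rw [e2, if_neg hd]
  ring

lemma diffCount_eq (d : Fin r → ZMod 2) (hd : d ≠ 0) :
    diffCount D d = ((D ×ˢ D).filter fun p => p.1 + p.2 = d).card := by
  unfold diffCount
  congr 1
  apply Finset.filter_congr
  intro p _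
  have hsub : p.1 - p.2 = p.1 + p.2 := by rw [sub_eq_add_neg, neg_self]
  simp only [hsub]
  constructor
  · exact fun h => h.2
  · intro h
    refine ⟨fun hc => hd ?_, h⟩
    rw [← h, hc]
    exact ((add_eq_zero_iff' p.2 p.2).2 rfl)

lemma same_count (a b : ℤ) (hH : ∀ g : Fin r → ZMod 2, g ≠ 0 → S D g = a ∨ S D g = b)
    (d d' : Fin r → ZMod 2) (hd : d ≠ 0) (hd' : d' ≠ 0) (hm : d ∈ D ↔ d' ∈ D) :
    diffCount D d = diffCount D d' := by
  rw [diffCount_eq D d hd, diffCount_eq D d' hd']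
  have h1 := key D a b hH d hd
  have h2 := key D a b hH d' hd'
  rw [if_congr hm rfl rfl] at h1
  have h2r : (2^r : ℤ) ≠ 0 := by positivity
  have := mul_left_cancel₀ h2r (h1.trans h2.symm)
  exact_mod_cast this

end Stmt14Aux

open Stmt14Aux in
theorem stmt14 {r ℓ : ℕ} (hr : 1 ≤ r) (a b : ℤ)
    (hℓ1 : 1 ≤ ℓ) (hℓ2 : ℓ ≤ 2 ^ r - 1)
    (D : Finset (Fin r → ZMod 2)) (hD : D.card = ℓ) :
    -- `C((ℤ/2ℤ)^r)` is a Hadamard matrix of order `2^r` containing the all-ones row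
    ((∀ s g, charTable r s g = 1 ∨ charTable r s g = -1) ∧
     (charTable r)ᵀ * charTable r = ((2 ^ r : ℕ) : ℤ) • 1 ∧
     (∃ s₀, ∀ g, charTable r s₀ g = 1)) ∧
    -- the equivalence
    ((∀ g h : Fin r → ZMod 2, g ≠ h →
        (∑ d ∈ D, charTable r d g * charTable r d h) = a ∨
        (∑ d ∈ D, charTable r d g * charTable r d h) = b)
      ↔
     ((∃ α β : ℕ,
        (∀ d ∈ D, d ≠ 0 → diffCount D d = α) ∧
        (∀ d : Fin r → ZMod 2, d ∉ D → d ≠ 0 → diffCount D d = β)) ∧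
      (∀ g : Fin r → ZMod 2, g ≠ 0 →
        (∑ d ∈ D, charTable r d g) = a ∨ (∑ d ∈ D, charTable r d g) = b))) := by
  have hS : ∀ g : Fin r → ZMod 2, (∑ d ∈ D, charTable r d g) = S D g := by
    intro g
    exact Finset.sum_congr rfl fun d _ => charTable_eq d g
  have hprod : ∀ g h : Fin r → ZMod 2,
      (∑ d ∈ D, charTable r d g * charTable r d h) = S D (g + h) := by
    intro g h
    refine Finset.sum_congr rfl fun d _ => ?_
    rw [charTable_eq d g, charTable_eq d h, c_mul_left]
  refine ⟨⟨?_, ?_, ?_⟩, ?_⟩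
  · intro s g
    rcases Nat.even_or_odd (∑ i, (g i).val * (s i).val) with he | ho
    · exact Or.inl he.neg_one_pow
    · exact Or.inr ho.neg_one_pow
  · ext g h
    rw [Matrix.mul_apply]
    simp only [Matrix.transpose_apply, Matrix.smul_apply, Matrix.one_apply, smul_eq_mul]
    have : ∀ s, charTable r s g * charTable r s h = c (g + h) s := by
      intro s
      rw [charTable_eq s g, charTable_eq s h, c_mul_left]
    rw [Finset.sum_congr rfl fun s _ => this s, sum_c]
    have hgh : g + h = 0 ↔ g = h := by rw [add_eq_zero_iff' g h, eq_comm]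
    rw [if_congr hgh rfl rfl]
    split_ifs <;> simp
  · refine ⟨0, fun g => ?_⟩
    simp [charTable]
  · constructor
    · intro H
      have hchar : ∀ g : Fin r → ZMod 2, g ≠ 0 → S D g = a ∨ S D g = b := by
        intro g hg
        have := H g 0 hg
        rw [hprod g 0, add_zero] at this
        exact this
      refine ⟨?_, fun g hg => by rw [hS]; exact hchar g hg⟩
      have hα : ∃ α : ℕ, ∀ d ∈ D, d ≠ 0 → diffCount D d = α := by
        by_cases hA : ∃ d₀, d₀ ∈ D ∧ d₀ ≠ 0
        · obtain ⟨d₀, hd₀, hn⟩ := hA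
          exact ⟨diffCount D d₀, fun d hd hdn =>
            same_count D a b hchar d d₀ hdn hn ⟨fun _ => hd₀, fun _ => hd⟩⟩
        · push_neg at hA
          exact ⟨0, fun d hd hdn => absurd (hA d hd) hdn⟩
      have hβ : ∃ β : ℕ, ∀ d : Fin r → ZMod 2, d ∉ D → d ≠ 0 → diffCount D d = β := by
        by_cases hB : ∃ d₀, d₀ ∉ D ∧ d₀ ≠ 0
        · obtain ⟨d₀, hd₀, hn⟩ := hB
          exact ⟨diffCount D d₀, fun d hd hdn =>
            same_count D a b hchar d d₀ hdn hn
              ⟨fun h => absurd h hd, fun h => absurd h hd₀⟩⟩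
        · push_neg at hB
          exact ⟨0, fun d hd hdn => absurd (hB d hd) hdn⟩
      obtain ⟨α, hα⟩ := hα
      obtain ⟨β, hβ⟩ := hβ
      exact ⟨α, β, hα, hβ⟩
    · rintro ⟨-, hchar⟩ g h hgh
      have hne : g + h ≠ 0 := by
        intro hc
        exact hgh ((add_eq_zero_iff' g h).1 hc).symm
      have := hchar (g + h) hne
      rw [hS] at this
      rw [hprod g h]
      exact this
end

section
/- Let r, s ≥ 1 be integers and suppose H = (H₁; H₂) is a BSHM(8rs, 4s, 4s, 0) with respect to the 4s × 8rs submatrix H₁. Then there exists a Hadamard matrix L of order 4s and a permutation σ of the column indices {1,…,8rs} such that the matrix obtained from H₁ by permuting its columns according to σ equals the 4s × 8rs block matrix (L L ⋯ L) consisting of 2r copies of L placed side by side (that is, H₁ with its columns reordered equals 𝟙ᵀ ⊗ L, where 𝟙ᵀ is the all-ones row of length 2r). -/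
open Matrix

/-- Columns agreeing on the rows in `R` is an equivalence relation. -/
def colRel {n : ℕ} (H : Matrix (Fin n) (Fin n) ℤ) (R : Finset (Fin n)) : Setoid (Fin n) :=
  ⟨fun j k => ∀ i ∈ R, H i j = H i k,
   ⟨fun _ _ _ => rfl, fun h i hi => (h i hi).symm, fun h1 h2 i hi => (h1 i hi).trans (h2 i hi)⟩⟩

/-- Rows of a Hadamard matrix are also orthogonal. -/
lemma rowOrth {n : ℕ} (hn : 0 < n) {H : Matrix (Fin n) (Fin n) ℤ} (h : _root_.IsHadamard H)
    (i i' : Fin n) : ∑ k, H i k * H i' k = if i = i' then (n : ℤ) else 0 := by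
  classical
  set A : Matrix (Fin n) (Fin n) ℚ := H.map Int.cast with hA
  have hn' : (n : ℚ) ≠ 0 := by positivity
  have hAtA : Aᵀ * A = (n : ℚ) • 1 := by
    ext j k
    have h2 := congrFun (congrFun h.2 j) k
    simp only [Matrix.mul_apply, Matrix.transpose_apply, Matrix.smul_apply, Matrix.one_apply,
      smul_eq_mul] at h2 ⊢
    simp only [hA, Matrix.map_apply]
    calc ∑ i, ((H i j : ℚ)) * ((H i k : ℚ))
        = ((∑ i, H i j * H i k : ℤ) : ℚ) := by push_cast; rfl
      _ = _ := by rw [h2]; split <;> simp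
  have h1 : ((n : ℚ)⁻¹ • Aᵀ) * A = 1 := by
    rw [Matrix.smul_mul, hAtA, smul_smul, inv_mul_cancel₀ hn', one_smul]
  have h2 : A * ((n : ℚ)⁻¹ • Aᵀ) = 1 := mul_eq_one_comm.mp h1
  rw [Matrix.mul_smul] at h2
  have h3 : A * Aᵀ = (n : ℚ) • 1 := by
    calc A * Aᵀ = (n : ℚ) • ((n : ℚ)⁻¹ • (A * Aᵀ)) := by
          rw [smul_smul, mul_inv_cancel₀ hn', one_smul]
      _ = (n : ℚ) • 1 := by rw [h2]
  have h4 := congrFun (congrFun h3 i) i'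
  simp only [Matrix.mul_apply, Matrix.transpose_apply, Matrix.smul_apply, Matrix.one_apply,
    smul_eq_mul, hA, Matrix.map_apply] at h4
  have h5 : ((∑ k, H i k * H i' k : ℤ) : ℚ) = ((if i = i' then (n : ℤ) else 0 : ℤ) : ℚ) := by
    push_cast
    rw [h4]; split <;> simp
  exact_mod_cast h5

theorem stmt15 {r s : ℕ} (hr : 1 ≤ r) (hs : 1 ≤ s)
    (H : Matrix (Fin (8 * r * s)) (Fin (8 * r * s)) ℤ)
    (R : Finset (Fin (8 * r * s))) (hRcard : R.card = 4 * s)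
    (hbshm : IsBSHM H R (4 * (s : ℤ)) 0) :
    ∃ L : Matrix (Fin (4 * s)) (Fin (4 * s)) ℤ,
      _root_.IsHadamard L ∧
      ∃ (e : {x // x ∈ R} ≃ Fin (4 * s)) (σ : (Fin (2 * r) × Fin (4 * s)) ≃ Fin (8 * r * s)),
        ∀ (i : {x // x ∈ R}) (p : Fin (2 * r) × Fin (4 * s)),
          H i.val (σ p) = L (e i) p.2 := by
  classical
  obtain ⟨hHad, hdot⟩ := hbshm
  have hent := hHad.1
  have hn : 0 < 8 * r * s := by positivity
  have hrow := rowOrth hn hHad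
  -- self dot product
  have hself : ∀ j, colDot H R j j = 4 * (s : ℤ) := by
    intro j
    have h1 : ∀ i ∈ R, H i j * H i j = 1 := fun i _ => by
      rcases hent i j with b | b <;> rw [b] <;> norm_num
    rw [colDot, Finset.sum_congr rfl h1, Finset.sum_const, hRcard]
    ring
  -- equality on R iff dot product equals 4s
  have heq_iff : ∀ j k, colDot H R j k = 4 * (s : ℤ) ↔ ∀ i ∈ R, H i j = H i k := by
    intro j k
    constructor
    · intro h
      have key : ∑ i ∈ R, ((1 : ℤ) - H i j * H i k) = 0 := by
        rw [Finset.sum_sub_distrib, Finset.sum_const, hRcard,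
          show ∑ x ∈ R, H x j * H x k = 4 * (s : ℤ) from h]
        ring
      have hnn : ∀ i ∈ R, (0 : ℤ) ≤ 1 - H i j * H i k := fun i _ => by
        rcases hent i j with a | a <;> rcases hent i k with b | b <;> rw [a, b] <;> norm_num
      have hz := (Finset.sum_eq_zero_iff_of_nonneg hnn).mp key
      intro i hi
      have hx := hz i hi
      rcases hent i j with a | a <;> rcases hent i k with b | b
      · rw [a, b]
      · exfalso; rw [a, b] at hx; norm_num at hx
      · exfalso; rw [a, b] at hx; norm_num at hx
      · rw [a, b]
    · intro h
      have h1 : ∀ i ∈ R, H i j * H i k = 1 := fun i hi => by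
        rcases hent i k with b | b <;> rw [h i hi, b] <;> norm_num
      rw [colDot, Finset.sum_congr rfl h1, Finset.sum_const, hRcard]
      ring
  -- counting lemma: each class has size 2r
  have fcard : ∀ j, (Finset.univ.filter fun k => colDot H R j k = 4 * (s : ℤ)).card = 2 * r := by
    intro j
    -- sum of squares of dot products
    have hB : ∑ k, (colDot H R j k) ^ 2 = (4 * (s : ℤ)) * ((8 * r * s : ℕ) : ℤ) := by
      calc ∑ k, (colDot H R j k) ^ 2
          = ∑ k, ∑ i ∈ R, ∑ i' ∈ R, (H i j * H i k) * (H i' j * H i' k) := by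
            refine Finset.sum_congr rfl fun k _ => ?_
            rw [colDot, sq, Finset.sum_mul_sum]
        _ = ∑ i ∈ R, ∑ k, ∑ i' ∈ R, (H i j * H i k) * (H i' j * H i' k) := Finset.sum_comm
        _ = ∑ i ∈ R, ∑ i' ∈ R, ∑ k, (H i j * H i k) * (H i' j * H i' k) :=
            Finset.sum_congr rfl fun i _ => Finset.sum_comm
        _ = ∑ i ∈ R, ∑ i' ∈ R, (H i j * H i' j) * ∑ k, H i k * H i' k := by
            refine Finset.sum_congr rfl fun i _ => Finset.sum_congr rfl fun i' _ => ?_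
            rw [Finset.mul_sum]
            exact Finset.sum_congr rfl fun k _ => by ring
        _ = ∑ i ∈ R, ∑ i' ∈ R, (H i j * H i' j) *
              (if i = i' then ((8 * r * s : ℕ) : ℤ) else 0) := by
            refine Finset.sum_congr rfl fun i _ => Finset.sum_congr rfl fun i' _ => ?_
            rw [hrow i i']
        _ = ∑ i ∈ R, (H i j * H i j) * ((8 * r * s : ℕ) : ℤ) := by
            refine Finset.sum_congr rfl fun i hi => ?_
            simp only [mul_ite, mul_zero, Finset.sum_ite_eq, hi, if_true]
        _ = ∑ i ∈ R, ((8 * r * s : ℕ) : ℤ) := by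
            refine Finset.sum_congr rfl fun i _ => ?_
            rcases hent i j with a | a <;> rw [a] <;> ring
        _ = (4 * (s : ℤ)) * ((8 * r * s : ℕ) : ℤ) := by
            rw [Finset.sum_const, hRcard]; push_cast; ring
    have hA : ∑ k, (colDot H R j k) ^ 2 =
        ((Finset.univ.filter fun k => colDot H R j k = 4 * (s : ℤ)).card : ℤ) *
          (4 * (s : ℤ)) ^ 2 := by
      rw [← Finset.sum_filter_add_sum_filter_not Finset.univ
        (fun k => colDot H R j k = 4 * (s : ℤ))]
      have hz : ∑ k ∈ Finset.univ.filter fun k => ¬ colDot H R j k = 4 * (s : ℤ),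
          (colDot H R j k) ^ 2 = 0 := by
        refine Finset.sum_eq_zero fun k hk => ?_
        rw [Finset.mem_filter] at hk
        have hkj : j ≠ k := fun hc => hk.2 (hc ▸ hself j)
        rcases hdot j k hkj with hc | hc
        · exact absurd hc hk.2
        · rw [hc]; ring
      rw [hz, add_zero]
      rw [Finset.sum_congr rfl (fun k hk => by
        rw [(Finset.mem_filter.mp hk).2]), Finset.sum_const, nsmul_eq_mul]
    have hs0 : (16 : ℤ) * (s : ℤ) ^ 2 ≠ 0 := by positivity
    have hkey : ((Finset.univ.filter fun k => colDot H R j k = 4 * (s : ℤ)).card : ℤ) *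
        (16 * (s : ℤ) ^ 2) = (2 * r : ℤ) * (16 * (s : ℤ) ^ 2) := by
      have := hA.symm.trans hB
      push_cast at this ⊢
      nlinarith [this]
    have := mul_right_cancel₀ hs0 hkey
    exact_mod_cast this
  -- quotient structure
  set st := colRel H R with hst
  have fiberCard : ∀ q : Quotient st, Fintype.card {k // Quotient.mk st k = q} = 2 * r := by
    intro q
    obtain ⟨j⟩ := q
    rw [Fintype.card_subtype, ← fcard j]
    congr 1
    apply Finset.filter_congr
    intro k _
    constructor
    · intro h
      have h' := Quotient.exact h
      exact (heq_iff j k).mpr fun i hi => (h' i hi).symm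
    · intro h
      exact Quotient.sound fun i hi => ((heq_iff j k).mp h i hi).symm
  have cardQ : Fintype.card (Quotient st) = 4 * s := by
    have h1 : Fintype.card ((q : Quotient st) × {k // Quotient.mk st k = q}) = 8 * r * s := by
      rw [Fintype.card_congr (Equiv.sigmaFiberEquiv (Quotient.mk st))]
      simp
    rw [Fintype.card_sigma] at h1
    simp only [fiberCard] at h1
    rw [Finset.sum_const, smul_eq_mul, Finset.card_univ] at h1
    have h2 : 8 * r * s = (4 * s) * (2 * r) := by ring
    exact Nat.eq_of_mul_eq_mul_right (by omega) (h1.trans h2)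
  -- build the data
  let e : {x // x ∈ R} ≃ Fin (4 * s) :=
    Fintype.equivFinOfCardEq (by rw [Fintype.card_coe, hRcard])
  let eQ : Quotient st ≃ Fin (4 * s) := Fintype.equivFinOfCardEq cardQ
  let F : ∀ q : Quotient st, {k // Quotient.mk st k = q} ≃ Fin (2 * r) :=
    fun q => Fintype.equivFinOfCardEq (fiberCard q)
  let rep : Fin (4 * s) → Fin (8 * r * s) := fun t => (eQ.symm t).out
  have hrep : ∀ t, Quotient.mk st (rep t) = eQ.symm t := fun t => Quotient.out_eq _
  let σ : (Fin (2 * r) × Fin (4 * s)) ≃ Fin (8 * r * s) :=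
    ((Equiv.prodComm _ _).trans ((Equiv.prodCongr eQ.symm (Equiv.refl _)).trans
      ((Equiv.sigmaEquivProd (Quotient st) (Fin (2 * r))).symm.trans
        ((Equiv.sigmaCongrRight fun q => (F q).symm).trans
          (Equiv.sigmaFiberEquiv (Quotient.mk st))))))
  have hσ : ∀ p : Fin (2 * r) × Fin (4 * s), Quotient.mk st (σ p) = eQ.symm p.2 := by
    intro p
    have : σ p = ((F (eQ.symm p.2)).symm p.1).val := rfl
    rw [this]
    exact ((F (eQ.symm p.2)).symm p.1).2
  refine ⟨fun a t => H (e.symm a).val (rep t), ⟨fun a t => hent _ _, ?_⟩, e, σ, ?_⟩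
  · -- L is Hadamard
    ext t t'
    simp only [Matrix.mul_apply, Matrix.transpose_apply, Matrix.smul_apply, Matrix.one_apply,
      smul_eq_mul]
    have hsum : ∑ a : Fin (4 * s), H (e.symm a).val (rep t) * H (e.symm a).val (rep t')
        = colDot H R (rep t) (rep t') := by
      rw [Equiv.sum_comp e.symm (fun x : {x // x ∈ R} => H x.val (rep t) * H x.val (rep t'))]
      rw [Finset.sum_coe_sort R (fun x => H x (rep t) * H x (rep t'))]
      rfl
    show ∑ a : Fin (4 * s), H (e.symm a).val (rep t) * H (e.symm a).val (rep t') = _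
    rw [hsum]
    by_cases h : t = t'
    · subst h
      rw [hself, if_pos rfl]
      push_cast; ring
    · have hne : Quotient.mk st (rep t) ≠ Quotient.mk st (rep t') := by
        rw [hrep, hrep]
        exact fun hc => h (eQ.symm.injective hc)
      have hne2 : rep t ≠ rep t' := fun hc => hne (by rw [hc])
      have hnrel : ¬ colDot H R (rep t) (rep t') = 4 * (s : ℤ) := fun hc =>
        hne (Quotient.sound ((heq_iff _ _).mp hc))
      rcases hdot _ _ hne2 with hc | hc
      · exact absurd hc hnrel
      · rw [hc, if_neg h, mul_zero]
  · -- the column permutation property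
    intro i p
    have h1 : Quotient.mk st (σ p) = Quotient.mk st (rep p.2) := by rw [hσ, hrep]
    have h2 : ∀ i' ∈ R, H i' (σ p) = H i' (rep p.2) := Quotient.exact h1
    show H i.val (σ p) = H (e.symm (e i)).val (rep p.2)
    rw [e.symm_apply_apply]
    exact h2 i.val i.2
end

section
/- Let r ≥ 2 and s ≥ 1 be integers and suppose H = (H₁; H₂) is a BSHM(4rs, 4s−1, 4s−1, −1) with respect to the (4s−1) × 4rs submatrix H₁. Then there exists a (4s−1) × 4s matrix L such that the 4s × 4s matrix (𝟙ᵀ; L), obtained by placing the all-ones row on top of L, is a Hadamard matrix of order 4s, and there exists a permutation σ of the column indices {1,…,4rs} such that the matrix obtained from H₁ by permuting its columns according to σ equals the (4s−1) × 4rs block matrix (L L ⋯ L) consisting of r copies of L placed side by side. -/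
open Matrix

private lemma sum_eq_card_of_le_one {α : Type*} (s : Finset α) (f : α → ℤ)
    (hle : ∀ i ∈ s, f i ≤ 1) (hsum : ∑ i ∈ s, f i = s.card) : ∀ i ∈ s, f i = 1 := by
  by_contra hcon
  push_neg at hcon
  obtain ⟨i, hi, hne⟩ := hcon
  have hlt : ∑ x ∈ s, f x < ∑ x ∈ s, (1:ℤ) :=
    Finset.sum_lt_sum hle ⟨i, hi, lt_of_le_of_ne (hle i hi) hne⟩
  rw [hsum, Finset.sum_const, nsmul_eq_mul, mul_one] at hlt
  exact lt_irrefl _ hlt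

private lemma orth_card_le {ι κ : Type*} [Fintype ι] [DecidableEq ι] [Fintype κ] (w : ι → κ → ℚ)
    (d : ℚ) (hd : d ≠ 0)
    (h : ∀ i i', ∑ x, w i x * w i' x = if i = i' then d else 0) :
    Fintype.card ι ≤ Fintype.card κ := by
  have hli : LinearIndependent ℚ w := by
    rw [Fintype.linearIndependent_iff]
    intro g hg i
    have hzero : ∀ x, (∑ i', g i' * w i' x) = 0 := by
      intro x
      have := congrFun hg x
      simpa [Finset.sum_apply] using this
    have h2 : (0:ℚ) = g i * d := by
      calc (0:ℚ) = ∑ x, (∑ i', g i' * w i' x) * w i x := by simp [hzero]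
        _ = ∑ x, ∑ i', g i' * (w i' x * w i x) := by
            refine Finset.sum_congr rfl fun x _ => ?_
            rw [Finset.sum_mul]
            exact Finset.sum_congr rfl fun _ _ => by ring
        _ = ∑ i', ∑ x, g i' * (w i' x * w i x) := Finset.sum_comm
        _ = ∑ i', g i' * ∑ x, w i' x * w i x := by
            refine Finset.sum_congr rfl fun i' _ => ?_
            rw [Finset.mul_sum]
        _ = ∑ i', g i' * (if i' = i then d else 0) := by simp_rw [h]
        _ = g i * d := by simp [mul_ite, mul_zero, Finset.sum_ite_eq']
    rcases mul_eq_zero.mp h2.symm with h3 | h3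
    · exact h3
    · exact absurd h3 hd
  have := hli.fintype_card_le_finrank
  simpa [Module.finrank_pi] using this

private lemma sum_comm4 {α β γ δ M : Type*} [AddCommMonoid M]
    (s1 : Finset α) (s2 : Finset β) (s3 : Finset γ) (s4 : Finset δ) (f : α → β → γ → δ → M) :
    ∑ a ∈ s1, ∑ b ∈ s2, ∑ c ∈ s3, ∑ d ∈ s4, f a b c d
      = ∑ c ∈ s3, ∑ d ∈ s4, ∑ a ∈ s1, ∑ b ∈ s2, f a b c d := by
  calc ∑ a ∈ s1, ∑ b ∈ s2, ∑ c ∈ s3, ∑ d ∈ s4, f a b c d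
      = ∑ a ∈ s1, ∑ c ∈ s3, ∑ b ∈ s2, ∑ d ∈ s4, f a b c d :=
        Finset.sum_congr rfl fun a _ => Finset.sum_comm
    _ = ∑ c ∈ s3, ∑ a ∈ s1, ∑ b ∈ s2, ∑ d ∈ s4, f a b c d := Finset.sum_comm
    _ = ∑ c ∈ s3, ∑ a ∈ s1, ∑ d ∈ s4, ∑ b ∈ s2, f a b c d :=
        Finset.sum_congr rfl fun c _ => Finset.sum_congr rfl fun a _ => Finset.sum_comm
    _ = ∑ c ∈ s3, ∑ d ∈ s4, ∑ a ∈ s1, ∑ b ∈ s2, f a b c d :=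
        Finset.sum_congr rfl fun c _ => Finset.sum_comm

set_option maxHeartbeats 1600000

theorem stmt16 {r s : ℕ} (hr : 2 ≤ r) (hs : 1 ≤ s)
    (H : Matrix (Fin (4 * r * s)) (Fin (4 * r * s)) ℤ)
    (R : Finset (Fin (4 * r * s))) (hRcard : R.card = 4 * s - 1)
    (hbshm : IsBSHM H R (4 * (s : ℤ) - 1) (-1)) :
    ∃ L : Matrix (Fin (4 * s - 1)) (Fin (4 * s)) ℤ,
      -- the matrix obtained by placing the all-ones row on top of `L` is a Hadamard
      -- matrix of order `4s`
      _root_.IsHadamard (Matrix.of fun i j : Fin (4 * s) =>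
        if h : i.val = 0 then 1 else L ⟨i.val - 1, by have := i.isLt; omega⟩ j) ∧
      ∃ (e : {x // x ∈ R} ≃ Fin (4 * s - 1)) (σ : (Fin r × Fin (4 * s)) ≃ Fin (4 * r * s)),
        ∀ (i : {x // x ∈ R}) (p : Fin r × Fin (4 * s)),
          H i.val (σ p) = L (e i) p.2 := by
  classical
  obtain ⟨⟨hpm, horth⟩, hsplit⟩ := hbshm
  -- basic numerology
  have hRZ : (R.card : ℤ) = 4 * (s:ℤ) - 1 := by rw [hRcard]; push_cast [Nat.cast_sub (by omega : 1 ≤ 4*s)]; ring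
  have hNne : ((4*r*s : ℕ) : ℚ) ≠ 0 := by
    have : 0 < 4*r*s := by positivity
    exact_mod_cast this.ne'
  -- entries are units
  have hpm1 : ∀ i j, H i j * H i j = 1 := by
    intro i j; rcases hpm i j with h | h <;> rw [h] <;> ring
  -- row orthogonality
  have hrowdot : ∀ i i' : Fin (4*r*s), ∑ j, H i j * H i' j
      = if i = i' then ((4*r*s:ℕ):ℤ) else 0 := by
    set Hq : Matrix (Fin (4*r*s)) (Fin (4*r*s)) ℚ := H.map (fun x : ℤ => (x:ℚ)) with hHq
    have horthQ : Hqᵀ * Hq = ((4*r*s:ℕ):ℚ) • 1 := by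
      ext i j
      have h1 := congrFun (congrFun horth i) j
      simp only [Matrix.mul_apply, Matrix.transpose_apply, Matrix.smul_apply, Matrix.one_apply,
        smul_eq_mul, mul_ite, mul_one, mul_zero] at h1 ⊢
      simp only [hHq, Matrix.map_apply]
      have : (∑ k, ((H k i : ℚ) * (H k j : ℚ))) = ((∑ k, H k i * H k j : ℤ) : ℚ) := by
        push_cast; rfl
      rw [this, h1]
      split <;> push_cast <;> simp
    have hQ : Hq * Hqᵀ = ((4*r*s:ℕ):ℚ) • 1 := by
      have h1 : (((4*r*s:ℕ):ℚ)⁻¹ • Hqᵀ) * Hq = 1 := by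
        rw [Matrix.smul_mul, horthQ, smul_smul, inv_mul_cancel₀ hNne, one_smul]
      have h2 := mul_eq_one_comm.mp h1
      rw [Matrix.mul_smul] at h2
      calc Hq * Hqᵀ = ((4*r*s:ℕ):ℚ) • (((4*r*s:ℕ):ℚ)⁻¹ • (Hq * Hqᵀ)) := by
            rw [smul_smul, mul_inv_cancel₀ hNne, one_smul]
        _ = ((4*r*s:ℕ):ℚ) • 1 := by rw [h2]
    intro i i'
    have h1 := congrFun (congrFun hQ i) i'
    simp only [Matrix.mul_apply, Matrix.transpose_apply, Matrix.smul_apply, Matrix.one_apply,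
      smul_eq_mul, mul_ite, mul_one, mul_zero, hHq, Matrix.map_apply] at h1
    have h2 : ((∑ j, H i j * H i' j : ℤ) : ℚ)
        = ((if i = i' then ((4*r*s:ℕ):ℤ) else 0 : ℤ) : ℚ) := by
      push_cast
      rw [h1]
      split <;> simp
    exact_mod_cast h2
  -- the column function restricted to R
  set c : Fin (4*r*s) → ({x // x ∈ R} → ℤ) := fun j i => H i.val j with hc
  have hbridge : ∀ j k, colDot H R j k = ∑ i : {x // x ∈ R}, c j i * c k i := by
    intro j k
    rw [colDot, ← Finset.sum_coe_sort R (fun i => H i j * H i k)]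
  have keyEq : ∀ j k, c j = c k → colDot H R j k = 4*(s:ℤ) - 1 := by
    intro j k hck
    have hone : ∀ i ∈ R, H i j * H i k = 1 := by
      intro i hi
      have : H i j = H i k := congrFun hck ⟨i, hi⟩
      rw [this]; exact hpm1 i k
    rw [colDot, Finset.sum_congr rfl hone, Finset.sum_const, nsmul_eq_mul, mul_one, hRZ]
  have keyNe : ∀ j k, c j ≠ c k → colDot H R j k = -1 := by
    intro j k hck
    have hjk : j ≠ k := fun h => hck (h ▸ rfl)
    rcases hsplit j k hjk with h | h
    · exfalso
      apply hck
      have hall : ∀ i ∈ R, H i j * H i k = 1 := by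
        apply sum_eq_card_of_le_one
        · intro i _
          rcases hpm i j with h1 | h1 <;> rcases hpm i k with h2 | h2 <;>
            rw [h1, h2] <;> norm_num
        · rw [← colDot, h, hRZ]
      funext i
      have h1 := hall i.val i.2
      show H i.val j = H i.val k
      rcases hpm i.val j with h2 | h2 <;> rcases hpm i.val k with h3 | h3 <;>
        rw [h2, h3] at h1 ⊢ <;> first | rfl | (exfalso; norm_num at h1)
    · exact h
  -- trace identity
  have htrace : ∑ j, ∑ k, (colDot H R j k)^2 = (R.card : ℤ) * ((4*r*s:ℕ):ℤ)^2 := by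
    have step1 : ∀ j k : Fin (4*r*s), (colDot H R j k)^2
        = ∑ i ∈ R, ∑ i' ∈ R, (H i j * H i' j) * (H i k * H i' k) := by
      intro j k
      rw [colDot, sq, Finset.sum_mul_sum]
      exact Finset.sum_congr rfl fun i _ => Finset.sum_congr rfl fun i' _ => by ring
    calc ∑ j, ∑ k, (colDot H R j k)^2
        = ∑ j, ∑ k, ∑ i ∈ R, ∑ i' ∈ R, (H i j * H i' j) * (H i k * H i' k) :=
          Finset.sum_congr rfl fun j _ => Finset.sum_congr rfl fun k _ => step1 j k
      _ = ∑ i ∈ R, ∑ i' ∈ R, ∑ j, ∑ k, (H i j * H i' j) * (H i k * H i' k) :=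
          sum_comm4 _ _ _ _ _
      _ = ∑ i ∈ R, ∑ i' ∈ R, (∑ j, H i j * H i' j) * (∑ k, H i k * H i' k) := by
          refine Finset.sum_congr rfl fun i _ => Finset.sum_congr rfl fun i' _ => ?_
          rw [Finset.sum_mul_sum]
      _ = ∑ i ∈ R, ∑ i' ∈ R, (if i = i' then (((4*r*s:ℕ):ℤ))^2 else 0) := by
          refine Finset.sum_congr rfl fun i _ => Finset.sum_congr rfl fun i' _ => ?_
          rw [hrowdot]
          split <;> ring
      _ = ∑ i ∈ R, ((4*r*s:ℕ):ℤ)^2 := by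
          refine Finset.sum_congr rfl fun i hi => ?_
          rw [Finset.sum_ite_eq, if_pos hi]
      _ = (R.card : ℤ) * ((4*r*s:ℕ):ℤ)^2 := by
          rw [Finset.sum_const, nsmul_eq_mul]
  -- class side
  set ℓZ : ℤ := 4*(s:ℤ) - 1 with hℓZ
  have hclass : ∀ j k, (colDot H R j k)^2 = if c j = c k then ℓZ^2 else 1 := by
    intro j k
    by_cases h : c j = c k
    · rw [keyEq j k h, if_pos h]
    · rw [keyNe j k h, if_neg h]; ring
  set N : ℤ := ∑ j, ∑ k, if c j = c k then (1:ℤ) else 0 with hN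
  have hNval : N = 4*(r:ℤ)^2*(s:ℤ) := by
    have h2 : ∀ j, ∑ k, (if c j = c k then ℓZ^2 else (1:ℤ))
        = (ℓZ^2 - 1) * (∑ k, if c j = c k then (1:ℤ) else 0) + ((4*r*s:ℕ):ℤ) := by
      intro j
      calc ∑ k, (if c j = c k then ℓZ^2 else (1:ℤ))
          = ∑ k, ((ℓZ^2 - 1) * (if c j = c k then (1:ℤ) else 0) + 1) := by
            refine Finset.sum_congr rfl fun k _ => ?_
            split <;> ring
        _ = (ℓZ^2 - 1) * (∑ k, if c j = c k then (1:ℤ) else 0) + ((4*r*s:ℕ):ℤ) := by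
            rw [Finset.sum_add_distrib, ← Finset.mul_sum, Finset.sum_const,
              Finset.card_univ, Fintype.card_fin, nsmul_eq_mul, mul_one]
    have h1 : (ℓZ^2 - 1) * N + ((4*r*s:ℕ):ℤ) * ((4*r*s:ℕ):ℤ) = ℓZ * ((4*r*s:ℕ):ℤ)^2 := by
      have hL : ∑ j, ∑ k, (if c j = c k then ℓZ^2 else (1:ℤ))
          = (R.card : ℤ) * ((4*r*s:ℕ):ℤ)^2 := by
        rw [← htrace]
        exact Finset.sum_congr rfl fun j _ => Finset.sum_congr rfl fun k _ => (hclass j k).symm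
      rw [Finset.sum_congr rfl (fun j _ => h2 j), Finset.sum_add_distrib, ← Finset.mul_sum,
        ← hN, Finset.sum_const, Finset.card_univ, Fintype.card_fin, nsmul_eq_mul] at hL
      rw [hL, hRZ, hℓZ]
    have hcast : ((4*r*s:ℕ):ℤ) = 4*(r:ℤ)*(s:ℤ) := by push_cast; ring
    rw [hcast, hℓZ] at h1
    have hcancel : (8*(s:ℤ)*(2*(s:ℤ)-1)) * N = (8*(s:ℤ)*(2*(s:ℤ)-1)) * (4*(r:ℤ)^2*(s:ℤ)) := by
      linear_combination h1
    have hs1 : (1:ℤ) ≤ (s:ℤ) := by exact_mod_cast hs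
    have hne : (8*(s:ℤ)*(2*(s:ℤ)-1)) ≠ 0 := by nlinarith
    exact mul_left_cancel₀ hne hcancel
  -- fibers
  set V : Finset ({x // x ∈ R} → ℤ) := Finset.univ.image c with hV
  set cnt : ({x // x ∈ R} → ℤ) → ℕ := fun v => (Finset.univ.filter (fun j => c j = v)).card with hcnt
  have hNfib : N = ∑ v ∈ V, (cnt v : ℤ)^2 := by
    have h1 : ∀ j, (∑ k, if c j = c k then (1:ℤ) else 0) = (cnt (c j) : ℤ) := by
      intro j
      have e1 : ∀ k, (if c j = c k then (1:ℤ) else 0) = (if c k = c j then (1:ℤ) else 0) := by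
        intro k; simp [eq_comm]
      rw [Finset.sum_congr rfl fun k _ => e1 k, Finset.sum_boole]
    calc N = ∑ j, (cnt (c j) : ℤ) := by
            rw [hN]; exact Finset.sum_congr rfl fun j _ => h1 j
      _ = ∑ v ∈ V, (Finset.univ.filter fun j => c j = v).card • ((cnt v : ℤ)) :=
          Finset.sum_comp (fun v => ((cnt v : ℤ))) c
      _ = ∑ v ∈ V, (cnt v : ℤ)^2 := by
          refine Finset.sum_congr rfl fun v _ => ?_
          rw [show (Finset.univ.filter fun j => c j = v).card = cnt v from rfl,
            nsmul_eq_mul, sq]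
  have hsum_cnt : ∑ v ∈ V, (cnt v : ℤ) = 4*(r:ℤ)*(s:ℤ) := by
    have h2 : (4*r*s : ℕ) = ∑ v ∈ V, cnt v := by
      have h1 := Finset.card_eq_sum_card_image c (Finset.univ : Finset (Fin (4*r*s)))
      rwa [Finset.card_univ, Fintype.card_fin] at h1
    have : ((4*r*s : ℕ) : ℤ) = ((∑ v ∈ V, cnt v : ℕ) : ℤ) := by exact_mod_cast h2
    rw [Nat.cast_sum] at this
    rw [← this]; push_cast; ring
  -- upper bound on number of classes
  have hV_pm : ∀ v ∈ V, ∀ i, v i = 1 ∨ v i = -1 := by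
    intro v hv i
    obtain ⟨j, _, rfl⟩ := Finset.mem_image.mp hv
    exact hpm i.val j
  have hDD : ∀ v ∈ V, ∀ u ∈ V, (∑ i : {x // x ∈ R}, v i * u i)
      = if v = u then 4*(s:ℤ) - 1 else -1 := by
    intro v hv u hu
    obtain ⟨j, _, rfl⟩ := Finset.mem_image.mp hv
    obtain ⟨k, _, rfl⟩ := Finset.mem_image.mp hu
    rw [← hbridge]
    by_cases h : c j = c k
    · rw [if_pos h]; exact keyEq j k h
    · rw [if_neg h]; exact keyNe j k h
  have hcardR : Fintype.card {x // x ∈ R} = 4*s-1 := by rw [Fintype.card_coe, hRcard]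
  have hm_le : V.card ≤ 4*s := by
    have hOpt : Fintype.card (Option {x // x ∈ R}) = 4*s := by
      rw [Fintype.card_option, hcardR]; omega
    set w : {v // v ∈ V} → Option {x // x ∈ R} → ℚ :=
      fun v o => o.elim 1 (fun i => ((v.val i : ℤ) : ℚ)) with hw
    have h4s : (4*(s:ℚ)) ≠ 0 := by
      have h1 : (1:ℚ) ≤ (s:ℚ) := by exact_mod_cast hs
      nlinarith
    have hdot : ∀ v u : {v // v ∈ V}, ∑ x, w v x * w u x = if v = u then (4*(s:ℚ)) else 0 := by
      intro v u
      rw [Fintype.sum_option]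
      have hnone : w v none * w u none = 1 := by simp [hw]
      have hsome : ∑ i : {x // x ∈ R}, w v (some i) * w u (some i)
          = ((∑ i : {x // x ∈ R}, v.val i * u.val i : ℤ) : ℚ) := by
        push_cast [hw]
        rfl
      rw [hnone, hsome, hDD v.val v.2 u.val u.2]
      by_cases h : v = u
      · subst h; rw [if_pos rfl, if_pos rfl]; push_cast; ring
      · rw [if_neg (fun hh => h (Subtype.ext hh)), if_neg h]; push_cast; ring
    have hle := orth_card_le w (4*(s:ℚ)) h4s hdot
    rwa [Fintype.card_coe, hOpt] at hle
  -- equality analysis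
  have hsq : ∑ v ∈ V, ((cnt v : ℤ) - r)^2 = ((V.card:ℤ) - 4*s) * (r:ℤ)^2 := by
    have expand : ∀ v ∈ V, ((cnt v : ℤ) - r)^2
        = (cnt v:ℤ)^2 - 2*(r:ℤ)*(cnt v:ℤ) + (r:ℤ)^2 := fun v _ => by ring
    rw [Finset.sum_congr rfl expand, Finset.sum_add_distrib, Finset.sum_sub_distrib,
      ← hNfib, ← Finset.mul_sum, hsum_cnt, hNval, Finset.sum_const, nsmul_eq_mul]
    ring
  have hnonneg : 0 ≤ ∑ v ∈ V, ((cnt v : ℤ) - r)^2 :=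
    Finset.sum_nonneg fun v _ => sq_nonneg _
  have hr2 : (2:ℤ) ≤ (r:ℤ) := by exact_mod_cast hr
  have hmV : V.card = 4*s := by
    have hge : (4*s : ℤ) ≤ (V.card : ℤ) := by nlinarith [hsq, hnonneg]
    have hle : (V.card : ℤ) ≤ (4*s : ℤ) := by exact_mod_cast hm_le
    have : (V.card : ℤ) = (4*s:ℤ) := le_antisymm hle hge
    exact_mod_cast this
  have hzero : ∑ v ∈ V, ((cnt v : ℤ) - r)^2 = 0 := by
    rw [hsq, hmV]; push_cast; ring
  have hcnt_r : ∀ v ∈ V, cnt v = r := by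
    intro v hv
    have h1 := (Finset.sum_eq_zero_iff_of_nonneg (fun v _ => sq_nonneg _)).mp hzero v hv
    have h2 : (cnt v:ℤ) - r = 0 := by
      exact pow_eq_zero_iff (two_ne_zero) |>.mp h1
    have : (cnt v : ℤ) = (r:ℤ) := by linarith
    exact_mod_cast this
  -- construction
  set e : {x // x ∈ R} ≃ Fin (4*s-1) := Fintype.equivFinOfCardEq hcardR with he
  have hcardV : Fintype.card {v // v ∈ V} = 4*s := by rw [Fintype.card_coe, hmV]
  set τ : Fin (4*s) ≃ {v // v ∈ V} := (Fintype.equivFinOfCardEq hcardV).symm with hτ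
  -- column classification map
  set κ : Fin (4*r*s) → Fin (4*s) :=
    fun j => τ.symm ⟨c j, Finset.mem_image_of_mem c (Finset.mem_univ j)⟩ with hκ
  have hκc : ∀ j t, κ j = t ↔ c j = (τ t).val := by
    intro j t
    constructor
    · intro h
      have := congrArg (fun x => (τ x).val) h
      simpa [hκ, Equiv.apply_symm_apply] using this
    · intro h
      have h2 : (⟨c j, Finset.mem_image_of_mem c (Finset.mem_univ j)⟩ : {v // v ∈ V}) = τ t :=
        Subtype.ext h
      rw [hκ]
      simp only [h2, Equiv.symm_apply_apply]
  have hfibcard : ∀ t, Fintype.card {j // κ j = t} = r := by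
    intro t
    rw [Fintype.card_subtype]
    have hfe : Finset.univ.filter (fun j => κ j = t)
        = Finset.univ.filter (fun j => c j = (τ t).val) :=
      Finset.filter_congr fun j _ => hκc j t
    rw [hfe]
    exact hcnt_r (τ t).val (τ t).2
  set et : ∀ t : Fin (4*s), Fin r ≃ {j // κ j = t} :=
    fun t => (Fintype.equivFinOfCardEq (hfibcard t)).symm with het
  set σ : (Fin r × Fin (4*s)) ≃ Fin (4*r*s) :=
    (Equiv.prodComm (Fin r) (Fin (4*s))).trans
      ((Equiv.sigmaEquivProd (Fin (4*s)) (Fin r)).symm.trans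
        ((Equiv.sigmaCongrRight et).trans (Equiv.sigmaFiberEquiv κ))) with hσ
  have hσval : ∀ p : Fin r × Fin (4*s), σ p = (et p.2 p.1).val := fun p => rfl
  have hcσ : ∀ p : Fin r × Fin (4*s), c (σ p) = (τ p.2).val := by
    intro p
    have h1 : κ (σ p) = p.2 := by rw [hσval]; exact (et p.2 p.1).2
    exact (hκc _ _).mp h1
  -- the equiv on Fin (4*s) splitting off 0
  have h0 : 0 < 4*s := by omega
  set ψ : Option (Fin (4*s-1)) ≃ Fin (4*s) :=
    { toFun := fun o => o.elim ⟨0, h0⟩ (fun i => ⟨i.val+1, by have := i.isLt; omega⟩),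
      invFun := fun j => if h : j.val = 0 then none
        else some ⟨j.val-1, by have := j.isLt; omega⟩,
      left_inv := by
        rintro (_|i)
        · simp
        · simp only [Option.elim]
          erw [dif_neg (by omega : ¬ (i.val + 1 = 0))]
          simp
      right_inv := by
        intro j
        by_cases h : j.val = 0
        · simp only [dif_pos h, Option.elim]
          exact Fin.ext h.symm
        · simp only [dif_neg h, Option.elim]
          apply Fin.ext
          show j.val - 1 + 1 = j.val
          omega } with hψ
  -- dot products of distinct class representatives
  have hdotV : ∀ t u : Fin (4*s), ∑ x : {x // x ∈ R}, (τ t).val x * (τ u).val x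
      = if t = u then 4*(s:ℤ)-1 else -1 := by
    intro t u
    rw [hDD (τ t).val (τ t).2 (τ u).val (τ u).2]
    by_cases h : t = u
    · subst h; rw [if_pos rfl, if_pos rfl]
    · rw [if_neg (fun hh => h (τ.injective (Subtype.ext hh))), if_neg h]
  refine ⟨Matrix.of (fun i j => (τ j).val (e.symm i)), ⟨?_, ?_⟩, e, σ, ?_⟩
  · -- entries ±1
    intro i j
    simp only [Matrix.of_apply]
    by_cases h : i.val = 0
    · rw [dif_pos h]; left; rfl
    · rw [dif_neg h]
      exact hV_pm (τ j).val (τ j).2 _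
  · -- orthogonality of the stacked matrix
    ext t u
    rw [Matrix.mul_apply]
    simp only [Matrix.transpose_apply, Matrix.of_apply, Matrix.smul_apply, Matrix.one_apply,
      smul_eq_mul]
    rw [← Equiv.sum_comp ψ (fun i : Fin (4*s) =>
      (if h : i.val = 0 then (1:ℤ) else (τ t).val (e.symm ⟨i.val - 1, by have := i.isLt; omega⟩)) *
      (if h : i.val = 0 then (1:ℤ) else (τ u).val (e.symm ⟨i.val - 1, by have := i.isLt; omega⟩)))]
    rw [Fintype.sum_option]
    have hnone : ψ none = (⟨0, h0⟩ : Fin (4*s)) := rfl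
    have hterm : ∀ i : Fin (4*s-1),
        ((if h : (ψ (some i)).val = 0 then (1:ℤ) else
            (τ t).val (e.symm ⟨(ψ (some i)).val - 1, by have := (ψ (some i)).isLt; omega⟩)) *
         (if h : (ψ (some i)).val = 0 then (1:ℤ) else
            (τ u).val (e.symm ⟨(ψ (some i)).val - 1, by have := (ψ (some i)).isLt; omega⟩)))
        = (τ t).val (e.symm i) * (τ u).val (e.symm i) := by
      intro i
      have hv : (ψ (some i)).val = i.val + 1 := rfl
      rw [dif_neg (by omega : ¬ (ψ (some i)).val = 0)]
      congr 2 <;> exact congrArg _ (congrArg e.symm (Fin.ext (by omega)))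
    rw [hnone]
    rw [Finset.sum_congr rfl fun i _ => hterm i]
    have h00 : ((⟨0, h0⟩ : Fin (4*s)) : ℕ) = 0 := rfl
    rw [dif_pos h00, dif_pos h00, one_mul]
    rw [Equiv.sum_comp e.symm (fun x : {x // x ∈ R} => (τ t).val x * (τ u).val x)]
    rw [hdotV]
    by_cases h : t = u
    · subst h; rw [if_pos rfl, if_pos rfl]; push_cast; ring
    · rw [if_neg h, if_neg h]; ring
  · -- the permutation property
    intro i p
    have h1 := congrFun (hcσ p) i
    simp only [Matrix.of_apply, Equiv.symm_apply_apply]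
    exact h1
end

section
/- Let n, ℓ, m be positive integers with 1 ≤ ℓ ≤ n−1. Suppose there exists a Hadamard matrix of order n that is a BSHM(n,ℓ,ℓ,0) with respect to some ℓ×n submatrix of its rows, and suppose there exists a Hadamard matrix of order m. Then there exists a Hadamard matrix of order nm that is a BSHM(nm, ℓm, ℓm, 0) with respect to some ℓm × nm submatrix of its rows. (Concretely, if K is the order-m Hadamard matrix and H is the BSHM(n,ℓ,ℓ,0) with respect to H₁, then the Kronecker product H ⊗ K is a BSHM(nm,ℓm,ℓm,0) with respect to H₁ ⊗ K.) -/
open Matrix Finset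

/-- A Hadamard matrix indexed by a finite type `I`: entries in `{1,-1}` and
`Hᵀ * H = (card I) • 1` (so its order is the cardinality of `I`). -/
def IsHadamardOn {I : Type} [Fintype I] [DecidableEq I] (H : Matrix I I ℤ) : Prop :=
  (∀ i j, H i j = 1 ∨ H i j = -1) ∧ Hᵀ * H = (Fintype.card I : ℤ) • 1

theorem stmt17 {n m ℓ : ℕ} (hℓ1 : 1 ≤ ℓ) (hℓ2 : ℓ ≤ n - 1) (hm : 1 ≤ m)
    (H : Matrix (Fin n) (Fin n) ℤ) (R : Finset (Fin n)) (hRcard : R.card = ℓ)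
    (hbshm : IsBSHM H R (ℓ : ℤ) 0)
    (K : Matrix (Fin m) (Fin m) ℤ) (hK : IsHadamardOn K) :
    -- the Kronecker product `H ⊗ K` is a Hadamard matrix of order `nm` that is a
    -- `BSHM(nm, ℓm, ℓm, 0)` with respect to the rows `R × univ` (i.e. `H₁ ⊗ K`)
    (IsHadamardOn (Matrix.kroneckerMap (· * ·) H K) ∧
     (R ×ˢ (Finset.univ : Finset (Fin m))).card = ℓ * m ∧
     (∀ p q : Fin n × Fin m, p ≠ q →
       (∑ x ∈ R ×ˢ (Finset.univ : Finset (Fin m)),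
         Matrix.kroneckerMap (· * ·) H K x p * Matrix.kroneckerMap (· * ·) H K x q)
           = ((ℓ * m : ℕ) : ℤ) ∨
       (∑ x ∈ R ×ˢ (Finset.univ : Finset (Fin m)),
         Matrix.kroneckerMap (· * ·) H K x p * Matrix.kroneckerMap (· * ·) H K x q) = 0)) ∧
    -- hence there exists a Hadamard matrix of order `nm` that is a `BSHM(nm, ℓm, ℓm, 0)`
    -- with respect to some `ℓm × nm` submatrix of its rows
    (∃ (H' : Matrix (Fin (n * m)) (Fin (n * m)) ℤ) (R' : Finset (Fin (n * m))),
      R'.card = ℓ * m ∧ IsBSHM H' R' ((ℓ * m : ℕ) : ℤ) 0) := by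

  obtain ⟨⟨hHent, hHmul⟩, hcol⟩ := hbshm
  obtain ⟨hKent, hKmul⟩ := hK
  set M := Matrix.kroneckerMap (· * ·) H K with hM
  have hKsum : ∀ a b : Fin m, (∑ t, K t a * K t b) = if a = b then (m : ℤ) else 0 := by
    intro a b
    have := congrFun (congrFun hKmul a) b
    simp only [Matrix.mul_apply, Matrix.transpose_apply, Matrix.smul_apply, Matrix.one_apply,
      Fintype.card_fin, smul_eq_mul] at this
    rw [this]
    split <;> simp
  have hHsum : ∀ a b : Fin n, (∑ i, H i a * H i b) = if a = b then (n : ℤ) else 0 := by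
    intro a b
    have := congrFun (congrFun hHmul a) b
    simp only [Matrix.mul_apply, Matrix.transpose_apply, Matrix.smul_apply, Matrix.one_apply,
      smul_eq_mul] at this
    rw [this]
    split <;> simp
  have key : ∀ (S : Finset (Fin n)) (p q : Fin n × Fin m),
      (∑ x ∈ S ×ˢ (Finset.univ : Finset (Fin m)), M x p * M x q)
        = (∑ i ∈ S, H i p.1 * H i q.1) * ∑ t, K t p.2 * K t q.2 := by
    intro S p q
    rw [Finset.sum_product, Finset.sum_mul]
    refine Finset.sum_congr rfl fun i _ => ?_
    rw [Finset.mul_sum]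
    refine Finset.sum_congr rfl fun t _ => ?_
    simp only [hM, Matrix.kroneckerMap_apply]
    ring
  have hdiag : ∀ p : Fin n, (∑ i ∈ R, H i p * H i p) = (ℓ : ℤ) := by
    intro p
    have h1 : ∀ i ∈ R, H i p * H i p = 1 := fun i _ => by
      rcases hHent i p with h | h <;> rw [h] <;> ring
    rw [Finset.sum_congr rfl h1, Finset.sum_const, hRcard]
    simp
  have hMent : ∀ x y : Fin n × Fin m, M x y = 1 ∨ M x y = -1 := by
    intro x y
    simp only [hM, Matrix.kroneckerMap_apply]
    rcases hHent x.1 y.1 with h | h <;> rcases hKent x.2 y.2 with h' | h' <;>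
      rw [h, h'] <;> simp
  have hMmul : Mᵀ * M = ((Fintype.card (Fin n × Fin m)) : ℤ) • 1 := by
    ext p q
    have : (Mᵀ * M) p q = ∑ x ∈ (Finset.univ : Finset (Fin n)) ×ˢ Finset.univ, M x p * M x q := by
      rw [Matrix.mul_apply, ← Finset.univ_product_univ]
      exact Finset.sum_congr rfl fun x _ => by rw [Matrix.transpose_apply]
    rw [this, key, hHsum, hKsum]
    simp only [Matrix.smul_apply, Matrix.one_apply, smul_eq_mul, Fintype.card_prod,
      Fintype.card_fin]
    rcases eq_or_ne p q with h | h
    · subst h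
      simp
    · have : p.1 ≠ q.1 ∨ p.2 ≠ q.2 := by
        by_contra hc
        push_neg at hc
        exact h (Prod.ext hc.1 hc.2)
      rcases this with h1 | h1
      · rw [if_neg h1, if_neg h]
        ring
      · rw [if_neg h1, if_neg h]
        ring
  have claim : ∀ p q : Fin n × Fin m, p ≠ q →
      (∑ x ∈ R ×ˢ (Finset.univ : Finset (Fin m)), M x p * M x q) = ((ℓ * m : ℕ) : ℤ) ∨
      (∑ x ∈ R ×ˢ (Finset.univ : Finset (Fin m)), M x p * M x q) = 0 := by
    intro p q hpq
    rw [key, hKsum]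
    rcases eq_or_ne p.2 q.2 with h2 | h2
    · rw [if_pos h2]
      have h1 : p.1 ≠ q.1 := fun h => hpq (Prod.ext h h2)
      rcases hcol p.1 q.1 h1 with h | h
      · left
        rw [show (∑ i ∈ R, H i p.1 * H i q.1) = colDot H R p.1 q.1 from rfl, h]
        push_cast
        ring
      · right
        rw [show (∑ i ∈ R, H i p.1 * H i q.1) = colDot H R p.1 q.1 from rfl, h]
        ring
    · right
      rw [if_neg h2]
      ring
  refine ⟨⟨⟨hMent, hMmul⟩, ?_, claim⟩, ?_⟩
  · rw [Finset.card_product, hRcard, Finset.card_univ, Fintype.card_fin]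
  · -- existence part
    set e : Fin n × Fin m ≃ Fin (n * m) := finProdFinEquiv with he
    refine ⟨Matrix.reindex e e M, (R ×ˢ Finset.univ).map e.toEmbedding, ?_, ⟨?_, ?_⟩, ?_⟩
    · rw [Finset.card_map, Finset.card_product, hRcard, Finset.card_univ, Fintype.card_fin]
    · intro i j
      exact hMent _ _
    · show (Matrix.reindex e e M)ᵀ * Matrix.reindex e e M = ((n * m : ℕ) : ℤ) • 1
      simp only [Matrix.reindex_apply, Matrix.transpose_submatrix]
      rw [Matrix.submatrix_mul_equiv, hMmul]
      simp only [Fintype.card_prod, Fintype.card_fin]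
      ext i j
      simp only [Matrix.submatrix_apply, Matrix.smul_apply, Matrix.one_apply, smul_eq_mul]
      rw [if_congr e.symm.injective.eq_iff rfl rfl]
    · intro j k hjk
      have hsum : colDot (Matrix.reindex e e M) ((R ×ˢ Finset.univ).map e.toEmbedding) j k
          = ∑ x ∈ R ×ˢ (Finset.univ : Finset (Fin m)), M x (e.symm j) * M x (e.symm k) := by
        unfold colDot
        rw [Finset.sum_map]
        refine Finset.sum_congr rfl fun x _ => ?_
        simp [Matrix.reindex_apply, Matrix.submatrix_apply]
      rw [hsum]
      exact claim _ _ (fun h => hjk (by simpa using congrArg e h))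
end

section
/- Let r ≥ 2 and s ≥ 1 be integers. Then the following are equivalent: (i) there exists a Hadamard matrix of order 4rs that is a BSHM(4rs, 4s, 4s, 0) with respect to some 4s × 4rs submatrix of its rows; (ii) there exists a Hadamard matrix of order 4rs that has the all-ones row among its rows and is a BSHM(4rs, 4s−1, 4s−1, −1) with respect to some (4s−1) × 4rs submatrix of its rows. -/
open Matrix

lemma sum_eq_card_all_one {ι : Type*} {S : Finset ι} {f : ι → ℤ}
    (hf : ∀ i ∈ S, f i = 1 ∨ f i = -1) (h : ∑ i ∈ S, f i = S.card) :
    ∀ i ∈ S, f i = 1 := by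
  have h0 : ∑ i ∈ S, (1 - f i) = 0 := by
    rw [Finset.sum_sub_distrib, h]; simp
  have h2 := (Finset.sum_eq_zero_iff_of_nonneg ?_).mp h0
  · intro i hi; have := h2 i hi; linarith
  · intro i hi; rcases hf i hi with h | h <;> simp [h]

lemma mul_transpose_of_hadamard {n : ℕ} (hn : 0 < n) {H : Matrix (Fin n) (Fin n) ℤ}
    (h : Hᵀ * H = (n : ℤ) • 1) : H * Hᵀ = (n : ℤ) • 1 := by
  have hn' : (n : ℚ) ≠ 0 := by exact_mod_cast hn.ne'
  set G : Matrix (Fin n) (Fin n) ℚ := fun i j => (H i j : ℚ) with hGdef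
  have hG : Gᵀ * G = (n : ℚ) • 1 := by
    ext i j
    have key : ((Hᵀ * H) i j : ℚ) = (Gᵀ * G) i j := by
      simp [Matrix.mul_apply, hGdef, Matrix.transpose_apply]; rfl
    rw [← key, h]
    simp [Matrix.smul_apply, Matrix.one_apply]
  have hleft : ((n : ℚ)⁻¹ • Gᵀ) * G = 1 := by
    rw [Matrix.smul_mul, hG, smul_smul, inv_mul_cancel₀ hn', one_smul]
  have hright : G * ((n : ℚ)⁻¹ • Gᵀ) = 1 := mul_eq_one_comm.mp hleft
  have hGGt : G * Gᵀ = (n : ℚ) • 1 := by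
    have h3 : G * Gᵀ = (n : ℚ) • (G * ((n : ℚ)⁻¹ • Gᵀ)) := by
      rw [Matrix.mul_smul, smul_smul, mul_inv_cancel₀ hn', one_smul]
    rw [h3, hright]
  ext i j
  have h1 : ((H * Hᵀ) i j : ℚ) = (G * Gᵀ) i j := by
    simp [Matrix.mul_apply, hGdef, Matrix.transpose_apply]; rfl
  rw [hGGt] at h1
  simp only [Matrix.smul_apply, Matrix.one_apply, smul_eq_mul] at h1 ⊢
  have : ((H * Hᵀ) i j : ℚ) = (((n : ℤ) * if i = j then 1 else 0 : ℤ) : ℚ) := by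
    rw [h1]; push_cast; ring_nf
  exact_mod_cast this

lemma fwd {r s : ℕ} (hr : 2 ≤ r) (hs : 1 ≤ s)
    (H : Matrix (Fin (4*r*s)) (Fin (4*r*s)) ℤ) (R : Finset (Fin (4*r*s)))
    (hcard : R.card = 4*s) (hB : IsBSHM H R (4*(s:ℤ)) 0) :
    ∃ (H' : Matrix (Fin (4*r*s)) (Fin (4*r*s)) ℤ) (R' : Finset (Fin (4*r*s))),
      (∃ i₀, ∀ j, H' i₀ j = 1) ∧ R'.card = 4*s-1 ∧ IsBSHM H' R' (4*(s:ℤ)-1) (-1) := by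
  obtain ⟨⟨hent, horth⟩, hdot⟩ := hB
  have hsq : ∀ i j, H i j * H i j = 1 := by
    intro i j; rcases hent i j with h | h <;> rw [h] <;> ring
  have hR : R.Nonempty := Finset.card_pos.mp (by rw [hcard]; omega)
  obtain ⟨i₀, hi₀⟩ := hR
  refine ⟨Matrix.of fun i j => H i j * H i₀ j, R.erase i₀, ⟨i₀, fun j => hsq i₀ j⟩,
    by rw [Finset.card_erase_of_mem hi₀, hcard], ⟨⟨?_, ?_⟩, ?_⟩⟩
  · intro i j
    rcases hent i j with h | h <;> rcases hent i₀ j with h' | h' <;>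
      simp [Matrix.of_apply, h, h']
  · ext j k
    simp only [Matrix.mul_apply, Matrix.transpose_apply, Matrix.of_apply]
    have e1 : ∀ i, (H i j * H i₀ j) * (H i k * H i₀ k)
        = (H i₀ j * H i₀ k) * (H i j * H i k) := fun i => by ring
    rw [Finset.sum_congr rfl (fun i _ => e1 i), ← Finset.mul_sum]
    have e2 : ∑ i, H i j * H i k = (Hᵀ * H) j k := by
      simp [Matrix.mul_apply, Matrix.transpose_apply]
    rw [e2, horth]
    rcases eq_or_ne j k with rfl | hne
    · simp [Matrix.smul_apply, Matrix.one_apply, hsq i₀ j]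
    · simp [Matrix.smul_apply, Matrix.one_apply, hne]
  · intro j k hjk
    have step1 : colDot (Matrix.of fun i j => H i j * H i₀ j) (R.erase i₀) j k
        = (H i₀ j * H i₀ k) * colDot H R j k - 1 := by
      have e3 : ∀ i, ((H i j * H i₀ j) * (H i k * H i₀ k))
          = (H i₀ j * H i₀ k) * (H i j * H i k) := fun i => by ring
      simp only [colDot, Matrix.of_apply]
      rw [Finset.sum_erase_eq_sub hi₀, Finset.sum_congr rfl (fun i _ => e3 i),
        ← Finset.mul_sum]
      have : (H i₀ j * H i₀ j) * (H i₀ k * H i₀ k) = 1 := by rw [hsq, hsq]; ring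
      rw [show H i₀ j * H i₀ j * (H i₀ k * H i₀ k) = 1 from this]
    rcases hdot j k hjk with h4 | h0
    · left
      have hall : ∀ i ∈ R, H i j * H i k = 1 := by
        apply sum_eq_card_all_one
        · intro i hi
          rcases hent i j with h | h <;> rcases hent i k with h' | h' <;>
            simp [h, h']
        · rw [hcard]
          have : colDot H R j k = ∑ i ∈ R, H i j * H i k := rfl
          rw [← this, h4]; push_cast; ring
      rw [step1, hall i₀ hi₀, h4]; ring
    · right
      rw [step1, h0]; ring

lemma not_mem_of_ones {r s : ℕ} (hr : 2 ≤ r) (hs : 1 ≤ s)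
    {H : Matrix (Fin (4*r*s)) (Fin (4*r*s)) ℤ} {R : Finset (Fin (4*r*s))} {i₀ : Fin (4*r*s)}
    (hi₀ : ∀ j, H i₀ j = 1) (hcard : R.card = 4*s-1)
    (hB : IsBSHM H R (4*(s:ℤ)-1) (-1)) : i₀ ∉ R := by
  classical
  intro hmem
  obtain ⟨⟨hent, horth⟩, hdot⟩ := hB
  have hn : 0 < 4*r*s := by
    have h1 : 1 ≤ r := by omega
    calc 0 < 4*1*1 := by norm_num
      _ ≤ 4*r*s := by exact Nat.mul_le_mul (Nat.mul_le_mul le_rfl h1) hs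
  have hsq : ∀ i j, H i j * H i j = 1 := by
    intro i j; rcases hent i j with h | h <;> rw [h] <;> ring
  have hpm : ∀ (j k : Fin (4*r*s)) (i : Fin (4*r*s)), i ∈ R →
      H i j * H i k = 1 ∨ H i j * H i k = -1 := by
    intro j k i _
    rcases hent i j with h | h <;> rcases hent i k with h' | h' <;> simp [h, h']
  have hc' : (R.card : ℤ) = 4*(s:ℤ) - 1 := by
    rw [hcard]; push_cast [Nat.cast_sub (by omega : 1 ≤ 4*s)]; ring
  have hHHt := mul_transpose_of_hadamard hn horth
  -- row sums
  have rowsum0 : ∀ i, i ≠ i₀ → ∑ j, H i j = 0 := by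
    intro i hi
    have e : (H * Hᵀ) i i₀ = ∑ j, H i j := by
      simp [Matrix.mul_apply, Matrix.transpose_apply, hi₀]
    rw [hHHt] at e
    simp [Matrix.smul_apply, Matrix.one_apply, hi] at e
    exact e.symm
  have rowsum1 : ∑ j, H i₀ j = ((4*r*s : ℕ) : ℤ) := by
    simp [hi₀]
  set j₀ : Fin (4*r*s) := ⟨0, hn⟩ with hj₀
  set C : Finset (Fin (4*r*s)) := Finset.univ.filter (fun k => ∀ i ∈ R, H i k = H i j₀) with hC
  -- colDot values
  have hCin : ∀ k ∈ C, colDot H R j₀ k = (R.card : ℤ) := by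
    intro k hk
    simp only [hC, Finset.mem_filter] at hk
    have : ∀ i ∈ R, H i j₀ * H i k = 1 := by
      intro i hi; rw [hk.2 i hi, hsq]
    simp only [colDot]
    rw [Finset.sum_congr rfl this]; simp
  have hj₀C : j₀ ∈ C := by simp [hC]
  have hCout : ∀ k, k ∉ C → colDot H R j₀ k = -1 := by
    intro k hk
    have hkj : j₀ ≠ k := by rintro rfl; exact hk hj₀C
    rcases hdot j₀ k hkj with h | h
    · exfalso
      apply hk
      simp only [hC, Finset.mem_filter]
      refine ⟨Finset.mem_univ _, fun i hi => ?_⟩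
      have hall := sum_eq_card_all_one (hpm j₀ k) (by rw [← colDot, h, hc'])
      have := hall i hi
      rcases hent i j₀ with h1 | h1 <;> rcases hent i k with h2 | h2 <;>
        rw [h1, h2] at this ⊢ <;> omega
    · exact h
  -- total sum of colDots over all columns
  have hsumall : ∑ k, colDot H R j₀ k = ((4*r*s : ℕ) : ℤ) := by
    simp only [colDot]
    rw [Finset.sum_comm]
    have e : ∀ i ∈ R, ∑ k, H i j₀ * H i k = H i j₀ * ∑ k, H i k := by
      intro i _; rw [Finset.mul_sum]
    rw [Finset.sum_congr rfl e]
    rw [Finset.sum_eq_single_of_mem i₀ hmem (fun i _ hi => by rw [rowsum0 i hi, mul_zero])]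
    rw [rowsum1, hi₀, one_mul]
  -- cardinality of C
  have hcount : (C.card : ℤ) * (4*(s:ℤ)) = 2 * ((4*r*s : ℕ) : ℤ) := by
    have split := Finset.sum_filter_add_sum_filter_not Finset.univ
      (fun k => ∀ i ∈ R, H i k = H i j₀) (fun k => colDot H R j₀ k)
    have e1 : ∑ k ∈ C, colDot H R j₀ k = (C.card : ℤ) * ((R.card : ℤ)) := by
      rw [Finset.sum_congr rfl hCin]; simp [mul_comm]
    have e2 : ∑ k ∈ Finset.univ.filter (fun k => ¬ ∀ i ∈ R, H i k = H i j₀),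
        colDot H R j₀ k = -(((4*r*s : ℕ) : ℤ) - C.card) := by
      have hmemc : ∀ k ∈ Finset.univ.filter (fun k => ¬ ∀ i ∈ R, H i k = H i j₀),
          colDot H R j₀ k = -1 := by
        intro k hk
        apply hCout
        simp only [hC, Finset.mem_filter] at hk ⊢
        tauto
      rw [Finset.sum_congr rfl hmemc]
      have hcc : (Finset.univ.filter (fun k => ¬ ∀ i ∈ R, H i k = H i j₀)).card
          = 4*r*s - C.card := by
        have := Finset.card_filter_add_card_filter_not
          (s := (Finset.univ : Finset (Fin (4*r*s)))) (p := fun k => ∀ i ∈ R, H i k = H i j₀)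
        rw [← hC] at this
        simp only [Finset.card_univ, Fintype.card_fin] at this
        omega
      rw [Finset.sum_const, hcc]
      have hle : C.card ≤ 4*r*s := by
        calc C.card ≤ (Finset.univ : Finset (Fin (4*r*s))).card := Finset.card_le_card (by simp [hC])
          _ = 4*r*s := by simp
      simp only [nsmul_eq_mul]
      rw [Nat.cast_sub hle]
      ring
    rw [e1, e2, hsumall] at split
    rw [hc'] at split
    linarith
  have hccard : (C.card : ℤ) = 2 * r := by
    have h4s : (4*(s:ℤ)) ≠ 0 := by
      have : (1:ℤ) ≤ (s:ℤ) := by exact_mod_cast hs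
      linarith
    apply mul_right_cancel₀ h4s
    rw [hcount]; push_cast; ring
  -- the negative sum of squares
  set T : ℤ := ∑ i ∈ Finset.univ \ R, (∑ k ∈ C, H i k)^2 with hT
  have hT0 : 0 ≤ T := Finset.sum_nonneg (fun i _ => sq_nonneg _)
  have hinner : ∀ k ∈ C, ∀ l ∈ C, ∑ i ∈ Finset.univ \ R, H i k * H i l
      = (if k = l then ((4*r*s : ℕ) : ℤ) else 0) - (4*(s:ℤ) - 1) := by
    intro k hk l hl
    simp only [hC, Finset.mem_filter] at hk hl
    have e1 : ∑ i ∈ Finset.univ \ R, H i k * H i l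
        = ∑ i, H i k * H i l - ∑ i ∈ R, H i k * H i l :=
      Finset.sum_sdiff_eq_sub (Finset.subset_univ R)
    have e2 : ∑ i, H i k * H i l = (if k = l then ((4*r*s : ℕ) : ℤ) else 0) := by
      have : ∑ i, H i k * H i l = (Hᵀ * H) k l := by
        simp [Matrix.mul_apply, Matrix.transpose_apply]
      rw [this, horth]
      simp [Matrix.smul_apply, Matrix.one_apply]
    have e3 : ∑ i ∈ R, H i k * H i l = 4*(s:ℤ) - 1 := by
      have : ∀ i ∈ R, H i k * H i l = 1 := by
        intro i hi; rw [hk.2 i hi, hl.2 i hi, hsq]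
      rw [Finset.sum_congr rfl this, Finset.sum_const, nsmul_eq_mul, mul_one]
      exact hc'
    rw [e1, e2, e3]
  have hTval : T = (C.card : ℤ) * ((4*r*s : ℕ) : ℤ) - (C.card : ℤ)^2 * (4*(s:ℤ) - 1) := by
    have e0 : T = ∑ i ∈ Finset.univ \ R, ∑ k ∈ C, ∑ l ∈ C, H i k * H i l := by
      simp only [hT, sq]
      refine Finset.sum_congr rfl (fun i _ => ?_)
      rw [Finset.sum_mul_sum]
    rw [e0, Finset.sum_comm]
    have e1 : ∀ k ∈ C, ∑ i ∈ Finset.univ \ R, ∑ l ∈ C, H i k * H i l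
        = ∑ l ∈ C, ∑ i ∈ Finset.univ \ R, H i k * H i l := fun k _ => Finset.sum_comm
    rw [Finset.sum_congr rfl e1]
    have e2 : ∀ k ∈ C, ∑ l ∈ C, ∑ i ∈ Finset.univ \ R, H i k * H i l
        = ((4*r*s : ℕ) : ℤ) - (C.card : ℤ) * (4*(s:ℤ) - 1) := by
      intro k hk
      rw [Finset.sum_congr rfl (hinner k hk)]
      rw [Finset.sum_sub_distrib, Finset.sum_ite_eq C k (fun _ => ((4*r*s : ℕ) : ℤ))]
      simp [hk, mul_comm]; ring
    rw [Finset.sum_congr rfl e2, Finset.sum_const, nsmul_eq_mul]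
    ring
  have hrZ : (2:ℤ) ≤ (r:ℤ) := by exact_mod_cast hr
  have hsZ : (1:ℤ) ≤ (s:ℤ) := by exact_mod_cast hs
  have hTneg : T < 0 := by
    rw [hTval, hccard]
    push_cast
    nlinarith [sq_nonneg ((r:ℤ))]
  omega

theorem stmt18 {r s : ℕ} (hr : 2 ≤ r) (hs : 1 ≤ s) :
    (∃ (H : Matrix (Fin (4 * r * s)) (Fin (4 * r * s)) ℤ)
       (R : Finset (Fin (4 * r * s))),
        R.card = 4 * s ∧ IsBSHM H R (4 * (s : ℤ)) 0) ↔
    (∃ (H : Matrix (Fin (4 * r * s)) (Fin (4 * r * s)) ℤ)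
       (R : Finset (Fin (4 * r * s))),
        (∃ i₀, ∀ j, H i₀ j = 1) ∧
        R.card = 4 * s - 1 ∧ IsBSHM H R (4 * (s : ℤ) - 1) (-1)) := by
  constructor
  · rintro ⟨H, R, hcard, hB⟩
    exact fwd hr hs H R hcard hB
  · rintro ⟨H, R, ⟨i₀, hi₀⟩, hcard, hB⟩
    have hnot := not_mem_of_ones hr hs hi₀ hcard hB
    obtain ⟨⟨hent, horth⟩, hdot⟩ := hB
    refine ⟨H, insert i₀ R, ?_, ⟨⟨hent, horth⟩, ?_⟩⟩
    · rw [Finset.card_insert_of_notMem hnot, hcard]; omega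
    · intro j k hjk
      have e : colDot H (insert i₀ R) j k = 1 + colDot H R j k := by
        simp only [colDot]
        rw [Finset.sum_insert hnot, hi₀ j, hi₀ k]; ring
      rcases hdot j k hjk with h | h
      · left; rw [e, h]; ring
      · right; rw [e, h]; ring
end

section
/- Let r ≥ 3 be an odd integer and s ≥ 1 an integer, and suppose H = (H₁; H₂) is a nontrivial BSHM(4rs, 4s−1, 4s−1, −1) with respect to H₁. Then r² can be written as a sum of 4rs−4s+1 odd integer squares; that is, there exist odd integers v₁, …, v_{4rs−4s+1} with v₁² + ⋯ + v_{4rs−4s+1}² = r². Consequently r ≥ 4s−1. -/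
open Matrix

/-- Row orthogonality from column orthogonality. -/
lemma rows_orth {n : ℕ} (hn : 0 < n) (H : Matrix (Fin n) (Fin n) ℤ)
    (hHH : Hᵀ * H = (n : ℤ) • 1) :
    ∀ i i' : Fin n, (∑ k, H i k * H i' k) = if i = i' then (n : ℤ) else 0 := by
  have hn0 : ((n : ℤ) : ℚ) ≠ 0 := by exact_mod_cast (by positivity : ((n:ℚ)) ≠ 0)
  set M : Matrix (Fin n) (Fin n) ℚ := fun i j => ((H i j : ℤ) : ℚ) with hM
  have colfull : ∀ j k, (∑ i, H i j * H i k) = if j = k then (n : ℤ) else 0 := by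
    intro j k
    have h := congrFun (congrFun hHH j) k
    simpa [Matrix.mul_apply, Matrix.transpose_apply, Matrix.smul_apply, Matrix.one_apply,
      mul_comm] using h
  have h1 : Mᵀ * M = ((n : ℤ) : ℚ) • 1 := by
    ext j k
    have := colfull j k
    have hc : ((∑ i, H i j * H i k : ℤ) : ℚ) = (((if j = k then (n:ℤ) else 0) : ℤ) : ℚ) :=
      congrArg (fun z : ℤ => (z : ℚ)) this
    push_cast at hc
    simp only [Matrix.mul_apply, Matrix.transpose_apply, Matrix.smul_apply, Matrix.one_apply]
    simp only [hM]
    rw [hc]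
    split <;> simp
  have h2 : (((n : ℤ) : ℚ)⁻¹ • Mᵀ) * M = 1 := by
    rw [Matrix.smul_mul, h1, smul_smul, inv_mul_cancel₀ hn0, one_smul]
  have h3 : M * (((n : ℤ) : ℚ)⁻¹ • Mᵀ) = 1 := mul_eq_one_comm.mp h2
  have h4 : M * Mᵀ = ((n : ℤ) : ℚ) • 1 := by
    have := congrArg (fun A => ((n : ℤ) : ℚ) • A) h3
    simp only [Matrix.mul_smul, smul_smul, mul_inv_cancel₀ hn0, one_smul, smul_eq_mul] at this
    rw [this]
  intro i i'
  have h5 := congrFun (congrFun h4 i) i'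
  simp only [Matrix.mul_apply, Matrix.transpose_apply, Matrix.smul_apply, Matrix.one_apply] at h5
  simp only [hM] at h5
  have : ((∑ k, H i k * H i' k : ℤ) : ℚ) = (((if i = i' then (n:ℤ) else 0) : ℤ) : ℚ) := by
    push_cast
    rw [h5]
    split <;> simp
  exact_mod_cast this

set_option maxHeartbeats 1600000 in
theorem stmt19 {r s : ℕ} (hr : 3 ≤ r) (hodd : Odd r) (hs : 1 ≤ s)
    (H : Matrix (Fin (4 * r * s)) (Fin (4 * r * s)) ℤ)
    (R : Finset (Fin (4 * r * s))) (hRcard : R.card = 4 * s - 1)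
    (h1 : 1 < 4 * s - 1) (h2 : 4 * s - 1 < 4 * r * s - 1)
    (hbshm : IsBSHM H R (4 * (s : ℤ) - 1) (-1)) :
    (∃ v : Fin (4 * r * s - 4 * s + 1) → ℤ,
      (∀ i, Odd (v i)) ∧ (∑ i, (v i) ^ 2) = (r : ℤ) ^ 2) ∧
    4 * s - 1 ≤ r := by
  obtain ⟨⟨hent, hHH⟩, hab⟩ := hbshm
  have hn12 : 12 ≤ 4 * r * s := by
    calc 12 = 4 * 3 * 1 := by norm_num
    _ ≤ 4 * r * s := Nat.mul_le_mul (Nat.mul_le_mul_left 4 hr) hs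
  have hnpos : 0 < 4 * r * s := by omega
  have hsq : ∀ i j, H i j * H i j = 1 := fun i j => by
    rcases hent i j with h | h <;> rw [h] <;> ring
  have rowfull := rows_orth hnpos H hHH
  have colfull : ∀ j k, (∑ i, H i j * H i k) = if j = k then ((4*r*s : ℕ) : ℤ) else 0 := by
    intro j k
    have h := congrFun (congrFun hHH j) k
    simpa [Matrix.mul_apply, Matrix.transpose_apply, Matrix.smul_apply, Matrix.one_apply,
      mul_comm] using h
  have hRcardZ : (R.card : ℤ) = 4 * (s : ℤ) - 1 := by
    rw [hRcard]; push_cast [Nat.cast_sub (by omega : 1 ≤ 4 * s)]; ring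
  have hself : ∀ j, colDot H R j j = 4 * (s : ℤ) - 1 := by
    intro j
    rw [colDot, ← hRcardZ]
    rw [Finset.sum_congr rfl (fun i _ => hsq i j)]
    simp
  -- agreement on R from maximal dot product
  have agree : ∀ j k, colDot H R j k = 4 * (s : ℤ) - 1 → ∀ i ∈ R, H i j = H i k := by
    intro j k hjk i hi
    have hzero : ∑ i ∈ R, (1 - H i j * H i k) = 0 := by
      rw [Finset.sum_sub_distrib]
      rw [colDot] at hjk
      rw [hjk]
      simp [hRcardZ]
    have hnonneg : ∀ i ∈ R, (0 : ℤ) ≤ 1 - H i j * H i k := by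
      intro i _
      rcases hent i j with h | h <;> rcases hent i k with h' | h' <;> simp [h, h']
    have := (Finset.sum_eq_zero_iff_of_nonneg hnonneg).mp hzero i hi
    have hprod : H i j * H i k = 1 := by linarith
    calc H i j = H i j * (H i k * H i k) := by rw [hsq]; ring
    _ = (H i j * H i k) * H i k := by ring
    _ = H i k := by rw [hprod]; ring
  -- the class of column j₀
  set j₀ : Fin (4 * r * s) := ⟨0, hnpos⟩ with hj₀
  set C : Finset (Fin (4 * r * s)) :=
    Finset.univ.filter (fun k => colDot H R j₀ k = 4 * (s : ℤ) - 1) with hC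
  have hmemC : ∀ k, k ∈ C ↔ colDot H R j₀ k = 4 * (s : ℤ) - 1 := by
    intro k; simp [hC]
  have hj₀C : j₀ ∈ C := (hmemC j₀).mpr (hself j₀)
  have hCtrans : ∀ j ∈ C, ∀ k ∈ C, colDot H R j k = 4 * (s : ℤ) - 1 := by
    intro j hj k hk
    have haj := agree j₀ j ((hmemC j).mp hj)
    have hak := agree j₀ k ((hmemC k).mp hk)
    rw [colDot, ← hself j₀, colDot]
    apply Finset.sum_congr rfl
    intro i hi
    rw [← haj i hi, ← hak i hi]
  -- sum of squared dot products
  have hsum2 : (∑ k, (colDot H R j₀ k) ^ 2) = ((4*r*s : ℕ) : ℤ) * (4 * (s:ℤ) - 1) := by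
    have expand : ∀ k, (colDot H R j₀ k) ^ 2 =
        ∑ i ∈ R, ∑ i' ∈ R, (H i j₀ * H i' j₀) * (H i k * H i' k) := by
      intro k
      rw [colDot, sq, Finset.sum_mul_sum]
      exact Finset.sum_congr rfl fun i _ => Finset.sum_congr rfl fun i' _ => by ring
    rw [Finset.sum_congr rfl fun k _ => expand k]
    rw [Finset.sum_comm]
    have inner : ∀ i ∈ R, (∑ k, ∑ i' ∈ R, (H i j₀ * H i' j₀) * (H i k * H i' k))
        = ((4*r*s : ℕ) : ℤ) := by
      intro i hi
      rw [Finset.sum_comm]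
      have : ∀ i' ∈ R, (∑ k, (H i j₀ * H i' j₀) * (H i k * H i' k))
          = if i = i' then ((4*r*s : ℕ) : ℤ) else 0 := by
        intro i' _
        rw [← Finset.mul_sum, rowfull i i']
        split
        · next h => subst h; rw [hsq]; ring
        · ring
      rw [Finset.sum_congr rfl this]
      simp [Finset.sum_ite_eq, hi]
    rw [Finset.sum_congr rfl inner, Finset.sum_const, hRcard, nsmul_eq_mul]
    have hc : ((4 * s - 1 : ℕ) : ℤ) = 4 * (s:ℤ) - 1 := by omega
    rw [hc]
    ring
  -- compute |C|
  have hCcardZ : (C.card : ℤ) = r := by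
    have split : (∑ k, (colDot H R j₀ k) ^ 2)
        = ∑ k ∈ C, (colDot H R j₀ k) ^ 2 + ∑ k ∈ Cᶜ, (colDot H R j₀ k) ^ 2 := by
      rw [add_comm, Finset.sum_compl_add_sum]
    have hCval : ∑ k ∈ C, (colDot H R j₀ k) ^ 2 = (C.card : ℤ) * (4 * (s:ℤ) - 1) ^ 2 := by
      rw [Finset.sum_congr rfl (fun k hk => by rw [(hmemC k).mp hk])]
      simp [mul_comm]
    have hCcval : ∑ k ∈ Cᶜ, (colDot H R j₀ k) ^ 2 = (Cᶜ.card : ℤ) := by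
      have hone : ∀ k ∈ Cᶜ, (colDot H R j₀ k) ^ 2 = 1 := by
        intro k hk
        have hk' : k ∉ C := Finset.mem_compl.mp hk
        have hkj : k ≠ j₀ := fun h => hk' (h ▸ hj₀C)
        rcases hab j₀ k (Ne.symm hkj) with h | h
        · exact absurd ((hmemC k).mpr h) hk'
        · rw [h]; norm_num
      rw [Finset.sum_congr rfl hone]
      simp
    have hcompl : (Cᶜ.card : ℤ) = ((4*r*s : ℕ) : ℤ) - C.card := by
      rw [Finset.card_compl]
      have hle : C.card ≤ Fintype.card (Fin (4*r*s)) := Finset.card_le_univ C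
      simp only [Fintype.card_fin] at *
      omega
    rw [split, hCval, hCcval, hcompl] at hsum2
    have key : (4 * (s:ℤ)) * (4 * (s:ℤ) - 2) * (C.card : ℤ)
        = (4 * (s:ℤ)) * (4 * (s:ℤ) - 2) * r := by
      have hcast : ((4*r*s : ℕ) : ℤ) = 4 * (r:ℤ) * s := by push_cast; ring
      rw [hcast] at hsum2
      nlinarith [hsum2]
    have hne : (4 * (s:ℤ)) * (4 * (s:ℤ) - 2) ≠ 0 := by
      have : (1:ℤ) ≤ s := by exact_mod_cast hs
      nlinarith
    exact mul_left_cancel₀ hne key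
  -- the vector of class row-sums over rows outside R
  set w : Fin (4 * r * s) → ℤ := fun i => ∑ j ∈ C, H i j with hw
  have hwodd : ∀ i, Odd (w i) := by
    intro i
    rw [Int.odd_iff]
    have h1 : ∀ j ∈ C, H i j % 2 = 1 := fun j _ => by
      rcases hent i j with h | h <;> rw [h] <;> decide
    calc w i % 2 = (∑ j ∈ C, H i j % 2) % 2 := Finset.sum_int_mod _ _ _
      _ = (∑ j ∈ C, (1:ℤ)) % 2 := by rw [Finset.sum_congr rfl h1]
      _ = (C.card : ℤ) % 2 := by simp
      _ = 1 := by
          rw [hCcardZ]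
          exact Int.odd_iff.mp (Int.odd_coe_nat r |>.mpr hodd)
  have key : ∀ j ∈ C, ∀ k ∈ C, (∑ i ∈ Rᶜ, H i j * H i k)
      = (if j = k then ((4*r*s : ℕ) : ℤ) else 0) - (4 * (s:ℤ) - 1) := by
    intro j hj k hk
    have h1 := Finset.sum_compl_add_sum R (fun i => H i j * H i k)
    have h2 := colfull j k
    have h3 := hCtrans j hj k hk
    rw [colDot] at h3
    rw [h2, h3] at h1
    linarith
  have hsumw : (∑ i ∈ Rᶜ, (w i) ^ 2) = (r : ℤ) ^ 2 := by
    have expand : ∀ i, (w i) ^ 2 = ∑ j ∈ C, ∑ k ∈ C, H i j * H i k := by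
      intro i
      rw [hw, sq, Finset.sum_mul_sum]
    calc (∑ i ∈ Rᶜ, (w i) ^ 2)
        = ∑ i ∈ Rᶜ, ∑ j ∈ C, ∑ k ∈ C, H i j * H i k :=
          Finset.sum_congr rfl fun i _ => expand i
      _ = ∑ j ∈ C, ∑ k ∈ C, ∑ i ∈ Rᶜ, H i j * H i k := by
          rw [Finset.sum_comm]
          exact Finset.sum_congr rfl fun j _ => Finset.sum_comm
      _ = ∑ j ∈ C, ∑ k ∈ C, ((if j = k then ((4*r*s : ℕ) : ℤ) else 0) - (4 * (s:ℤ) - 1)) :=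
          Finset.sum_congr rfl fun j hj => Finset.sum_congr rfl fun k hk => key j hj k hk
      _ = ∑ _j ∈ C, (((4*r*s : ℕ) : ℤ) - (C.card : ℤ) * (4 * (s:ℤ) - 1)) := by
          apply Finset.sum_congr rfl
          intro j hj
          rw [Finset.sum_sub_distrib, Finset.sum_ite_eq, if_pos hj, Finset.sum_const,
            nsmul_eq_mul]
      _ = (C.card : ℤ) * (((4*r*s : ℕ) : ℤ) - (C.card : ℤ) * (4 * (s:ℤ) - 1)) := by
          rw [Finset.sum_const, nsmul_eq_mul]
      _ = (r : ℤ) ^ 2 := by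
          rw [hCcardZ]
          push_cast
          ring
  -- transfer to Fin (4rs - 4s + 1)
  have h4s : 4 * s ≤ 4 * r * s := by
    calc 4 * s = 4 * 1 * s := by ring
    _ ≤ 4 * r * s := Nat.mul_le_mul_right s (Nat.mul_le_mul_left 4 (by omega))
  have hRcCard : Rᶜ.card = 4 * r * s - 4 * s + 1 := by
    rw [Finset.card_compl, hRcard, Fintype.card_fin]
    omega
  set N := 4 * r * s - 4 * s + 1 with hN
  let e : ↥(Rᶜ : Finset (Fin (4*r*s))) ≃ Fin N :=
    (Rᶜ).equivFin.trans (finCongr hRcCard)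
  refine ⟨⟨fun i => w ((e.symm i) : Fin (4*r*s)), fun i => hwodd _, ?_⟩, ?_⟩
  · calc (∑ i : Fin N, (w ((e.symm i) : Fin (4*r*s))) ^ 2)
        = ∑ x : ↥(Rᶜ : Finset (Fin (4*r*s))), (w (x : Fin (4*r*s))) ^ 2 :=
          Equiv.sum_comp e.symm
            (fun x : ↥(Rᶜ : Finset (Fin (4*r*s))) => (w (x : Fin (4*r*s))) ^ 2)
      _ = ∑ i ∈ Rᶜ, (w i) ^ 2 := Finset.sum_coe_sort Rᶜ (fun i => (w i) ^ 2)
      _ = (r : ℤ) ^ 2 := hsumw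
  · -- each odd square is ≥ 1, so N ≤ r²
    have hge : ∀ i : Fin N, (1 : ℤ) ≤ (w ((e.symm i) : Fin (4*r*s))) ^ 2 := by
      intro i
      have ho := hwodd ((e.symm i) : Fin (4*r*s))
      have hne : w ((e.symm i) : Fin (4*r*s)) ≠ 0 := by
        intro h0; rw [h0] at ho; exact (Int.not_odd_iff_even.mpr Even.zero) ho
      have := Int.one_le_abs hne
      nlinarith [sq_abs (w ((e.symm i) : Fin (4*r*s)))]
    have hNle : (N : ℤ) ≤ (r : ℤ) ^ 2 := by
      have hsum := hsumw
      have : (N : ℤ) = ∑ i : Fin N, (1 : ℤ) := by simp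
      calc (N : ℤ) = ∑ i : Fin N, (1 : ℤ) := this
        _ ≤ ∑ i : Fin N, (w ((e.symm i) : Fin (4*r*s))) ^ 2 :=
            Finset.sum_le_sum fun i _ => hge i
        _ = ∑ x : ↥(Rᶜ : Finset (Fin (4*r*s))), (w (x : Fin (4*r*s))) ^ 2 :=
            Equiv.sum_comp e.symm
              (fun x : ↥(Rᶜ : Finset (Fin (4*r*s))) => (w (x : Fin (4*r*s))) ^ 2)
        _ = ∑ i ∈ Rᶜ, (w i) ^ 2 := Finset.sum_coe_sort Rᶜ (fun i => (w i) ^ 2)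
        _ = (r : ℤ) ^ 2 := hsumw
    have hNcast : (N : ℤ) = 4 * (r:ℤ) * s - 4 * s + 1 := by
      rw [hN]
      push_cast [Nat.cast_sub h4s]
      ring
    rw [hNcast] at hNle
    have hrZ : (3 : ℤ) ≤ r := by exact_mod_cast hr
    have hsZ : (1 : ℤ) ≤ s := by exact_mod_cast hs
    have : 4 * (s:ℤ) - 1 ≤ r := by nlinarith
    omega
end
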